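/- arXiv:2208.01519 — 5 statements merged into one kernel-verified Lean document; each statement's English description precedes it below -/
import Mathlib

section
/- Let n₁,n₂,n₃ ≥ 3 and let W be a subset of vertices of the Hamming graph HG(n₁,n₂,n₃;3). Then two distinct vertices α = (a₁,a₂,a₃) and β = (b₁,b₂,b₃), neither of which lies in W, are resolved by W (i.e., some w ∈ W has d(α,w) ≠ d(β,w)) if and only if W_{1,a₁} ∪ W_{2,a₂} ∪ W_{3,a₃} ≠ W_{1,b₁} ∪ W_{2,b₂} ∪ W_{3,b₃}. -/
/-- The generalized Hamming graph `HG(n₁,n₂,n₃;3)`: vertices are triples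
(modeled with `Fin nᵢ`), adjacent iff they differ in all three coordinates. -/
def HG (n₁ n₂ n₃ : ℕ) : SimpleGraph (Fin n₁ × Fin n₂ × Fin n₃) where
  Adj x y := x.1 ≠ y.1 ∧ x.2.1 ≠ y.2.1 ∧ x.2.2 ≠ y.2.2
  symm := ⟨fun x y h => ⟨h.1.symm, h.2.1.symm, h.2.2.symm⟩⟩
  loopless := ⟨fun x h => h.1 rfl⟩

/-- `W` is a resolving set for `HG(n₁,n₂,n₃;3)`: every pair of distinct vertices not
in `W` is resolved by some landmark in `W`. -/
def IsResolving {n₁ n₂ n₃ : ℕ} (W : Set (Fin n₁ × Fin n₂ × Fin n₃)) : Prop :=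
  ∀ x y : Fin n₁ × Fin n₂ × Fin n₃, x ∉ W → y ∉ W → x ≠ y →
    ∃ w ∈ W, (HG n₁ n₂ n₃).dist x w ≠ (HG n₁ n₂ n₃).dist y w

/-- The metric dimension of `HG(n₁,n₂,n₃;3)`: minimum size of a resolving set. -/
noncomputable def metricDim (n₁ n₂ n₃ : ℕ) : ℕ :=
  sInf {k | ∃ W : Set (Fin n₁ × Fin n₂ × Fin n₃), IsResolving W ∧ W.ncard = k}

/-- The block `W_{1,a}`: landmarks whose first coordinate is `a`. -/
def block1 {n₁ n₂ n₃ : ℕ} (W : Set (Fin n₁ × Fin n₂ × Fin n₃)) (a : Fin n₁) :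
    Set (Fin n₁ × Fin n₂ × Fin n₃) := {w ∈ W | w.1 = a}

/-- The block `W_{2,a}`: landmarks whose second coordinate is `a`. -/
def block2 {n₁ n₂ n₃ : ℕ} (W : Set (Fin n₁ × Fin n₂ × Fin n₃)) (a : Fin n₂) :
    Set (Fin n₁ × Fin n₂ × Fin n₃) := {w ∈ W | w.2.1 = a}

/-- The block `W_{3,a}`: landmarks whose third coordinate is `a`. -/
def block3 {n₁ n₂ n₃ : ℕ} (W : Set (Fin n₁ × Fin n₂ × Fin n₃)) (a : Fin n₃) :
    Set (Fin n₁ × Fin n₂ × Fin n₃) := {w ∈ W | w.2.2 = a}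


lemma exists_third {n : ℕ} (hn : 3 ≤ n) (a b : Fin n) : ∃ c : Fin n, c ≠ a ∧ c ≠ b := by
  by_contra h
  push_neg at h
  have hsub : (Finset.univ : Finset (Fin n)) ⊆ {a, b} := by
    intro c _
    rcases eq_or_ne c a with rfl | hc
    · simp
    · simp [h c hc]
  have := Finset.card_le_card hsub
  simp only [Finset.card_univ, Fintype.card_fin] at this
  have h2 : ({a, b} : Finset (Fin n)).card ≤ 2 := (Finset.card_insert_le _ _).trans (by simp)
  omega

lemma dist_char2 {n₁ n₂ n₃ : ℕ} (h₁ : 3 ≤ n₁) (h₂ : 3 ≤ n₂) (h₃ : 3 ≤ n₃)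
  (x y : Fin n₁ × Fin n₂ × Fin n₃) (hxy : x ≠ y) (hadj : ¬ (HG n₁ n₂ n₃).Adj x y) :
  (HG n₁ n₂ n₃).dist x y = 2 := by
  obtain ⟨c₁, hc₁a, hc₁b⟩ := exists_third h₁ x.1 y.1
  obtain ⟨c₂, hc₂a, hc₂b⟩ := exists_third h₂ x.2.1 y.2.1
  obtain ⟨c₃, hc₃a, hc₃b⟩ := exists_third h₃ x.2.2 y.2.2
  have hz1 : (HG n₁ n₂ n₃).Adj x (c₁, c₂, c₃) := ⟨hc₁a.symm, hc₂a.symm, hc₃a.symm⟩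
  have hz2 : (HG n₁ n₂ n₃).Adj (c₁, c₂, c₃) y := ⟨hc₁b, hc₂b, hc₃b⟩
  have hle : (HG n₁ n₂ n₃).dist x y ≤ 2 := by
    have := SimpleGraph.dist_le (SimpleGraph.Walk.cons hz1 (SimpleGraph.Walk.cons hz2 SimpleGraph.Walk.nil))
    simpa using this
  have hr : (HG n₁ n₂ n₃).Reachable x y := ⟨SimpleGraph.Walk.cons hz1 (SimpleGraph.Walk.cons hz2 SimpleGraph.Walk.nil)⟩
  have hpos : 0 < (HG n₁ n₂ n₃).dist x y := hr.pos_dist_of_ne hxy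
  have hne1 : (HG n₁ n₂ n₃).dist x y ≠ 1 := fun h => hadj (SimpleGraph.dist_eq_one_iff_adj.mp h)
  omega

theorem stmt1 (n₁ n₂ n₃ : ℕ) (h₁ : 3 ≤ n₁) (h₂ : 3 ≤ n₂) (h₃ : 3 ≤ n₃)
    (W : Set (Fin n₁ × Fin n₂ × Fin n₃))
    (α β : Fin n₁ × Fin n₂ × Fin n₃) (hαβ : α ≠ β) (hα : α ∉ W) (hβ : β ∉ W) :
    (∃ w ∈ W, (HG n₁ n₂ n₃).dist α w ≠ (HG n₁ n₂ n₃).dist β w) ↔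
      block1 W α.1 ∪ block2 W α.2.1 ∪ block3 W α.2.2 ≠
        block1 W β.1 ∪ block2 W β.2.1 ∪ block3 W β.2.2 := by
  set Uα := block1 W α.1 ∪ block2 W α.2.1 ∪ block3 W α.2.2 with hUα
  set Uβ := block1 W β.1 ∪ block2 W β.2.1 ∪ block3 W β.2.2 with hUβ
  have memW : ∀ (v : Fin n₁ × Fin n₂ × Fin n₃) (U : Set _)
      (a : Fin n₁) (b : Fin n₂) (c : Fin n₃),
      U = block1 W a ∪ block2 W b ∪ block3 W c → ∀ w ∈ U, w ∈ W := by
    rintro v U a b c rfl w hw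
    rcases hw with (hw | hw) | hw <;> exact hw.1
  have mem_iff : ∀ (v : Fin n₁ × Fin n₂ × Fin n₃), ∀ w ∈ W,
      (w ∈ block1 W v.1 ∪ block2 W v.2.1 ∪ block3 W v.2.2 ↔ ¬ (HG n₁ n₂ n₃).Adj v w) := by
    intro v w hw
    simp only [block1, block2, block3, Set.mem_union, Set.mem_setOf_eq, HG]
    constructor
    · rintro ((⟨_, h⟩ | ⟨_, h⟩) | ⟨_, h⟩) hadj
      · exact hadj.1 h.symm
      · exact hadj.2.1 h.symm
      · exact hadj.2.2 h.symm
    · intro hna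
      rcases not_and_or.mp hna with h | h
      · exact Or.inl (Or.inl ⟨hw, (not_ne_iff.mp h).symm⟩)
      · rcases not_and_or.mp h with h | h
        · exact Or.inl (Or.inr ⟨hw, (not_ne_iff.mp h).symm⟩)
        · exact Or.inr ⟨hw, (not_ne_iff.mp h).symm⟩
  have key : ∀ w ∈ W, ((HG n₁ n₂ n₃).dist α w ≠ (HG n₁ n₂ n₃).dist β w ↔
      ¬ (w ∈ Uα ↔ w ∈ Uβ)) := by
    intro w hw
    have hαw : α ≠ w := fun h => hα (h ▸ hw)
    have hβw : β ≠ w := fun h => hβ (h ▸ hw)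
    rw [hUα, hUβ, mem_iff α w hw, mem_iff β w hw]
    by_cases ha : (HG n₁ n₂ n₃).Adj α w <;> by_cases hb : (HG n₁ n₂ n₃).Adj β w
    · rw [SimpleGraph.dist_eq_one_iff_adj.mpr ha, SimpleGraph.dist_eq_one_iff_adj.mpr hb]
      simp [ha, hb]
    · rw [SimpleGraph.dist_eq_one_iff_adj.mpr ha, dist_char2 h₁ h₂ h₃ β w hβw hb]
      simp [ha, hb]
    · rw [dist_char2 h₁ h₂ h₃ α w hαw ha, SimpleGraph.dist_eq_one_iff_adj.mpr hb]
      simp [ha, hb]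
    · rw [dist_char2 h₁ h₂ h₃ α w hαw ha, dist_char2 h₁ h₂ h₃ β w hβw hb]
      simp [ha, hb]
  constructor
  · rintro ⟨w, hw, hne⟩ heq
    exact (key w hw).mp hne (by rw [heq])
  · intro hne
    have : ¬ (Uα ⊆ Uβ ∧ Uβ ⊆ Uα) := fun ⟨u1, u2⟩ => hne (u1.antisymm u2)
    rcases not_and_or.mp this with h | h
    · obtain ⟨w, hwU, hwn⟩ := Set.not_subset.mp h
      have hwW : w ∈ W := memW α Uα α.1 α.2.1 α.2.2 hUα w hwU
      exact ⟨w, hwW, (key w hwW).mpr (by tauto)⟩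
    · obtain ⟨w, hwU, hwn⟩ := Set.not_subset.mp h
      have hwW : w ∈ W := memW β Uβ β.1 β.2.1 β.2.2 hUβ w hwU
      exact ⟨w, hwW, (key w hwW).mpr (by tauto)⟩
end

section
/- Let n₁,n₂,n₃ ≥ 3. If W is a resolving set for the Hamming graph HG(n₁,n₂,n₃;3), then |W_{i,a}| + |W_{i,b}| ≥ 3 for every i ∈ {1,2,3} and every pair of distinct values a,b ∈ [nᵢ]. -/
lemma exists_ne_ne {n : ℕ} (h : 3 ≤ n) (a b : Fin n) : ∃ c : Fin n, c ≠ a ∧ c ≠ b := by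
  by_contra h'
  push_neg at h'
  have hsub : (Finset.univ : Finset (Fin n)) ⊆ {a, b} := by
    intro c _
    rcases eq_or_ne c a with rfl | hca
    · simp
    · simp [h' c hca]
  have h1 := Finset.card_le_card hsub
  have h2 : ({a, b} : Finset (Fin n)).card ≤ 2 := by
    refine le_trans (Finset.card_insert_le _ _) ?_
    simp
  simp [Finset.card_univ] at h1
  omega

instance {n₁ n₂ n₃ : ℕ} : DecidableRel (HG n₁ n₂ n₃).Adj := fun x y =>
  inferInstanceAs (Decidable (x.1 ≠ y.1 ∧ x.2.1 ≠ y.2.1 ∧ x.2.2 ≠ y.2.2))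

lemma HG_dist {n₁ n₂ n₃ : ℕ} (h₁ : 3 ≤ n₁) (h₂ : 3 ≤ n₂) (h₃ : 3 ≤ n₃)
    (x y : Fin n₁ × Fin n₂ × Fin n₃) :
    (HG n₁ n₂ n₃).dist x y = if x = y then 0 else if (HG n₁ n₂ n₃).Adj x y then 1 else 2 := by
  split_ifs with he ha
  · subst he; exact SimpleGraph.dist_self
  · exact SimpleGraph.dist_eq_one_iff_adj.mpr ha
  · obtain ⟨c, hc⟩ := exists_ne_ne h₁ x.1 y.1
    obtain ⟨d, hd⟩ := exists_ne_ne h₂ x.2.1 y.2.1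
    obtain ⟨e, hez⟩ := exists_ne_ne h₃ x.2.2 y.2.2
    have hxz : (HG n₁ n₂ n₃).Adj x (c, d, e) := ⟨hc.1.symm, hd.1.symm, hez.1.symm⟩
    have hzy : (HG n₁ n₂ n₃).Adj (c, d, e) y := ⟨hc.2, hd.2, hez.2⟩
    have hle : (HG n₁ n₂ n₃).dist x y ≤ 2 := by
      simpa using SimpleGraph.dist_le (hxz.toWalk.append hzy.toWalk)
    have hpos : 0 < (HG n₁ n₂ n₃).dist x y :=
      SimpleGraph.Reachable.pos_dist_of_ne ⟨hxz.toWalk.append hzy.toWalk⟩ he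
    have hne1 : (HG n₁ n₂ n₃).dist x y ≠ 1 := fun h => ha (SimpleGraph.dist_eq_one_iff_adj.mp h)
    omega

lemma subset_pair {α : Type*} [Finite α] [Nonempty α] {S : Set α} (h : S.ncard ≤ 2) :
    ∃ u v, S ⊆ {u, v} := by
  have hfin : S.Finite := S.toFinite
  interval_cases h' : S.ncard
  · rw [Set.ncard_eq_zero hfin] at h'
    exact ⟨Classical.arbitrary α, Classical.arbitrary α, by simp [h']⟩
  · rw [Set.ncard_eq_one] at h'
    obtain ⟨u, rfl⟩ := h'
    exact ⟨u, u, by simp⟩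
  · rw [Set.ncard_eq_two] at h'
    obtain ⟨u, v, _, rfl⟩ := h'
    exact ⟨u, v, le_refl _⟩

lemma choose_cd {m k : ℕ} (hm : 3 ≤ m) (hk : 3 ≤ k) (u v : Fin m × Fin k) :
    ∃ c d, ∀ w : Fin m × Fin k, (w = u ∨ w = v) → (w.1 = c ↔ w.2 ≠ d) := by
  by_cases h12 : u.1 = v.1
  · obtain ⟨d, hd⟩ := exists_ne_ne hk u.2 v.2
    refine ⟨u.1, d, fun w hw => ?_⟩
    rcases hw with rfl | rfl
    · exact iff_of_true rfl hd.1.symm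
    · exact iff_of_true h12.symm hd.2.symm
  · by_cases h3 : u.2 = v.2
    · obtain ⟨c, hc⟩ := exists_ne_ne hm u.1 v.1
      refine ⟨c, u.2, fun w hw => ?_⟩
      rcases hw with rfl | rfl
      · exact iff_of_false hc.1.symm (by simp)
      · exact iff_of_false hc.2.symm (by simp [h3.symm])
    · refine ⟨u.1, v.2, fun w hw => ?_⟩
      rcases hw with rfl | rfl
      · exact iff_of_true rfl h3
      · exact iff_of_false (fun h => h12 h.symm) (by simp)

lemma core1 {n₁ n₂ n₃ : ℕ} (h₁ : 3 ≤ n₁) (h₂ : 3 ≤ n₂) (h₃ : 3 ≤ n₃)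
    (W : Set (Fin n₁ × Fin n₂ × Fin n₃)) (hW : IsResolving W)
    (a b : Fin n₁) (hab : a ≠ b) : 3 ≤ (block1 W a).ncard + (block1 W b).ncard := by
  by_contra hlt
  push_neg at hlt
  have : Nonempty (Fin n₁ × Fin n₂ × Fin n₃) := by
    refine ⟨⟨⟨0, by omega⟩, ⟨0, by omega⟩, ⟨0, by omega⟩⟩⟩
  have hcard : (block1 W a ∪ block1 W b).ncard ≤ 2 :=
    le_trans (Set.ncard_union_le _ _) (by omega)
  obtain ⟨u, v, huv⟩ := subset_pair hcard
  obtain ⟨c, d, hcd⟩ := choose_cd h₂ h₃ u.2 v.2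
  have key : ∀ w, w ∈ block1 W a ∪ block1 W b → (w.2.1 = c ↔ w.2.2 ≠ d) := by
    intro w hw
    rcases huv hw with h | h
    · exact hcd w.2 (Or.inl (by rw [h]))
    · exact hcd w.2 (Or.inr (by rw [Set.mem_singleton_iff.mp h]))
  have hx : ((a, c, d) : Fin n₁ × Fin n₂ × Fin n₃) ∉ W := by
    intro hx
    have := key (a, c, d) (Or.inl ⟨hx, rfl⟩)
    simp at this
  have hy : ((b, c, d) : Fin n₁ × Fin n₂ × Fin n₃) ∉ W := by
    intro hy
    have := key (b, c, d) (Or.inr ⟨hy, rfl⟩)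
    simp at this
  have hxy : ((a, c, d) : Fin n₁ × Fin n₂ × Fin n₃) ≠ (b, c, d) :=
    fun h => hab (congrArg Prod.fst h)
  obtain ⟨w, hwW, hwd⟩ := hW _ _ hx hy hxy
  apply hwd
  rw [HG_dist h₁ h₂ h₃, HG_dist h₁ h₂ h₃]
  by_cases hwa : w.1 = a
  · have hk := key w (Or.inl ⟨hwW, hwa⟩)
    have hxw : ((a, c, d) : Fin n₁ × Fin n₂ × Fin n₃) ≠ w := by
      rintro rfl
      simp at hk
    have hyw : ((b, c, d) : Fin n₁ × Fin n₂ × Fin n₃) ≠ w := by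
      rintro rfl
      exact hab hwa.symm
    have hax : ¬ (HG n₁ n₂ n₃).Adj (a, c, d) w := fun h => h.1 hwa.symm
    have hay : ¬ (HG n₁ n₂ n₃).Adj (b, c, d) w := by
      rintro ⟨-, hc2, hd2⟩
      rcases eq_or_ne w.2.1 c with h | h
      · exact hc2 h.symm
      · exact hd2 (not_not.mp (fun hh => h (hk.mpr hh))).symm
    rw [if_neg hxw, if_neg hyw, if_neg hax, if_neg hay]
  · by_cases hwb : w.1 = b
    · have hk := key w (Or.inr ⟨hwW, hwb⟩)
      have hxw : ((a, c, d) : Fin n₁ × Fin n₂ × Fin n₃) ≠ w := by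
        rintro rfl
        exact hab hwb
      have hyw : ((b, c, d) : Fin n₁ × Fin n₂ × Fin n₃) ≠ w := by
        rintro rfl
        simp at hk
      have hay : ¬ (HG n₁ n₂ n₃).Adj (b, c, d) w := fun h => h.1 hwb.symm
      have hax : ¬ (HG n₁ n₂ n₃).Adj (a, c, d) w := by
        rintro ⟨-, hc2, hd2⟩
        rcases eq_or_ne w.2.1 c with h | h
        · exact hc2 h.symm
        · exact hd2 (not_not.mp (fun hh => h (hk.mpr hh))).symm
      rw [if_neg hxw, if_neg hyw, if_neg hax, if_neg hay]
    · have hxw : ((a, c, d) : Fin n₁ × Fin n₂ × Fin n₃) ≠ w := fun h => hwa (congrArg Prod.fst h).symm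
      have hyw : ((b, c, d) : Fin n₁ × Fin n₂ × Fin n₃) ≠ w := fun h => hwb (congrArg Prod.fst h).symm
      rw [if_neg hxw, if_neg hyw]
      by_cases hadj : c ≠ w.2.1 ∧ d ≠ w.2.2
      · rw [if_pos ⟨fun h => hwa h.symm, hadj.1, hadj.2⟩,
          if_pos ⟨fun h => hwb h.symm, hadj.1, hadj.2⟩]
      · have hax : ¬ (HG n₁ n₂ n₃).Adj (a, c, d) w := fun h => hadj ⟨h.2.1, h.2.2⟩
        have hay : ¬ (HG n₁ n₂ n₃).Adj (b, c, d) w := fun h => hadj ⟨h.2.1, h.2.2⟩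
        rw [if_neg hax, if_neg hay]

lemma core2 {n₁ n₂ n₃ : ℕ} (h₁ : 3 ≤ n₁) (h₂ : 3 ≤ n₂) (h₃ : 3 ≤ n₃)
    (W : Set (Fin n₁ × Fin n₂ × Fin n₃)) (hW : IsResolving W)
    (a b : Fin n₂) (hab : a ≠ b) : 3 ≤ (block2 W a).ncard + (block2 W b).ncard := by
  by_contra hlt
  push_neg at hlt
  have : Nonempty (Fin n₁ × Fin n₂ × Fin n₃) := by
    refine ⟨⟨⟨0, by omega⟩, ⟨0, by omega⟩, ⟨0, by omega⟩⟩⟩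
  have hcard : (block2 W a ∪ block2 W b).ncard ≤ 2 :=
    le_trans (Set.ncard_union_le _ _) (by omega)
  obtain ⟨u, v, huv⟩ := subset_pair hcard
  obtain ⟨c, d, hcd⟩ := choose_cd h₁ h₃ (u.1, u.2.2) (v.1, v.2.2)
  have key : ∀ w, w ∈ block2 W a ∪ block2 W b → (w.1 = c ↔ w.2.2 ≠ d) := by
    intro w hw
    rcases huv hw with h | h
    · exact hcd (w.1, w.2.2) (Or.inl (by rw [h]))
    · exact hcd (w.1, w.2.2) (Or.inr (by rw [Set.mem_singleton_iff.mp h]))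
  have hx : ((c, a, d) : Fin n₁ × Fin n₂ × Fin n₃) ∉ W := by
    intro hx
    have := key (c, a, d) (Or.inl ⟨hx, rfl⟩)
    simp at this
  have hy : ((c, b, d) : Fin n₁ × Fin n₂ × Fin n₃) ∉ W := by
    intro hy
    have := key (c, b, d) (Or.inr ⟨hy, rfl⟩)
    simp at this
  have hxy : ((c, a, d) : Fin n₁ × Fin n₂ × Fin n₃) ≠ (c, b, d) :=
    fun h => hab (congrArg (fun z => z.2.1) h)
  obtain ⟨w, hwW, hwd⟩ := hW _ _ hx hy hxy
  apply hwd
  rw [HG_dist h₁ h₂ h₃, HG_dist h₁ h₂ h₃]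
  by_cases hwa : w.2.1 = a
  · have hk := key w (Or.inl ⟨hwW, hwa⟩)
    have hxw : ((c, a, d) : Fin n₁ × Fin n₂ × Fin n₃) ≠ w := by
      rintro rfl
      simp at hk
    have hyw : ((c, b, d) : Fin n₁ × Fin n₂ × Fin n₃) ≠ w := by
      rintro rfl
      exact hab hwa.symm
    have hax : ¬ (HG n₁ n₂ n₃).Adj (c, a, d) w := fun h => h.2.1 hwa.symm
    have hay : ¬ (HG n₁ n₂ n₃).Adj (c, b, d) w := by
      rintro ⟨hc2, -, hd2⟩
      rcases eq_or_ne w.1 c with h | h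
      · exact hc2 h.symm
      · exact hd2 (not_not.mp (fun hh => h (hk.mpr hh))).symm
    rw [if_neg hxw, if_neg hyw, if_neg hax, if_neg hay]
  · by_cases hwb : w.2.1 = b
    · have hk := key w (Or.inr ⟨hwW, hwb⟩)
      have hxw : ((c, a, d) : Fin n₁ × Fin n₂ × Fin n₃) ≠ w := by
        rintro rfl
        exact hab hwb
      have hyw : ((c, b, d) : Fin n₁ × Fin n₂ × Fin n₃) ≠ w := by
        rintro rfl
        simp at hk
      have hay : ¬ (HG n₁ n₂ n₃).Adj (c, b, d) w := fun h => h.2.1 hwb.symm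
      have hax : ¬ (HG n₁ n₂ n₃).Adj (c, a, d) w := by
        rintro ⟨hc2, -, hd2⟩
        rcases eq_or_ne w.1 c with h | h
        · exact hc2 h.symm
        · exact hd2 (not_not.mp (fun hh => h (hk.mpr hh))).symm
      rw [if_neg hxw, if_neg hyw, if_neg hax, if_neg hay]
    · have hxw : ((c, a, d) : Fin n₁ × Fin n₂ × Fin n₃) ≠ w :=
        fun h => hwa (congrArg (fun z => z.2.1) h).symm
      have hyw : ((c, b, d) : Fin n₁ × Fin n₂ × Fin n₃) ≠ w :=
        fun h => hwb (congrArg (fun z => z.2.1) h).symm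
      rw [if_neg hxw, if_neg hyw]
      by_cases hadj : c ≠ w.1 ∧ d ≠ w.2.2
      · rw [if_pos ⟨hadj.1, fun h => hwa h.symm, hadj.2⟩,
          if_pos ⟨hadj.1, fun h => hwb h.symm, hadj.2⟩]
      · have hax : ¬ (HG n₁ n₂ n₃).Adj (c, a, d) w := fun h => hadj ⟨h.1, h.2.2⟩
        have hay : ¬ (HG n₁ n₂ n₃).Adj (c, b, d) w := fun h => hadj ⟨h.1, h.2.2⟩
        rw [if_neg hax, if_neg hay]

lemma core3 {n₁ n₂ n₃ : ℕ} (h₁ : 3 ≤ n₁) (h₂ : 3 ≤ n₂) (h₃ : 3 ≤ n₃)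
    (W : Set (Fin n₁ × Fin n₂ × Fin n₃)) (hW : IsResolving W)
    (a b : Fin n₃) (hab : a ≠ b) : 3 ≤ (block3 W a).ncard + (block3 W b).ncard := by
  by_contra hlt
  push_neg at hlt
  have : Nonempty (Fin n₁ × Fin n₂ × Fin n₃) := by
    refine ⟨⟨⟨0, by omega⟩, ⟨0, by omega⟩, ⟨0, by omega⟩⟩⟩
  have hcard : (block3 W a ∪ block3 W b).ncard ≤ 2 :=
    le_trans (Set.ncard_union_le _ _) (by omega)
  obtain ⟨u, v, huv⟩ := subset_pair hcard
  obtain ⟨c, d, hcd⟩ := choose_cd h₁ h₂ (u.1, u.2.1) (v.1, v.2.1)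
  have key : ∀ w, w ∈ block3 W a ∪ block3 W b → (w.1 = c ↔ w.2.1 ≠ d) := by
    intro w hw
    rcases huv hw with h | h
    · exact hcd (w.1, w.2.1) (Or.inl (by rw [h]))
    · exact hcd (w.1, w.2.1) (Or.inr (by rw [Set.mem_singleton_iff.mp h]))
  have hx : ((c, d, a) : Fin n₁ × Fin n₂ × Fin n₃) ∉ W := by
    intro hx
    have := key (c, d, a) (Or.inl ⟨hx, rfl⟩)
    simp at this
  have hy : ((c, d, b) : Fin n₁ × Fin n₂ × Fin n₃) ∉ W := by
    intro hy
    have := key (c, d, b) (Or.inr ⟨hy, rfl⟩)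
    simp at this
  have hxy : ((c, d, a) : Fin n₁ × Fin n₂ × Fin n₃) ≠ (c, d, b) :=
    fun h => hab (congrArg (fun z => z.2.2) h)
  obtain ⟨w, hwW, hwd⟩ := hW _ _ hx hy hxy
  apply hwd
  rw [HG_dist h₁ h₂ h₃, HG_dist h₁ h₂ h₃]
  by_cases hwa : w.2.2 = a
  · have hk := key w (Or.inl ⟨hwW, hwa⟩)
    have hxw : ((c, d, a) : Fin n₁ × Fin n₂ × Fin n₃) ≠ w := by
      rintro rfl
      simp at hk
    have hyw : ((c, d, b) : Fin n₁ × Fin n₂ × Fin n₃) ≠ w := by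
      rintro rfl
      exact hab hwa.symm
    have hax : ¬ (HG n₁ n₂ n₃).Adj (c, d, a) w := fun h => h.2.2 hwa.symm
    have hay : ¬ (HG n₁ n₂ n₃).Adj (c, d, b) w := by
      rintro ⟨hc2, hd2, -⟩
      rcases eq_or_ne w.1 c with h | h
      · exact hc2 h.symm
      · exact hd2 (not_not.mp (fun hh => h (hk.mpr hh))).symm
    rw [if_neg hxw, if_neg hyw, if_neg hax, if_neg hay]
  · by_cases hwb : w.2.2 = b
    · have hk := key w (Or.inr ⟨hwW, hwb⟩)
      have hxw : ((c, d, a) : Fin n₁ × Fin n₂ × Fin n₃) ≠ w := by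
        rintro rfl
        exact hab hwb
      have hyw : ((c, d, b) : Fin n₁ × Fin n₂ × Fin n₃) ≠ w := by
        rintro rfl
        simp at hk
      have hay : ¬ (HG n₁ n₂ n₃).Adj (c, d, b) w := fun h => h.2.2 hwb.symm
      have hax : ¬ (HG n₁ n₂ n₃).Adj (c, d, a) w := by
        rintro ⟨hc2, hd2, -⟩
        rcases eq_or_ne w.1 c with h | h
        · exact hc2 h.symm
        · exact hd2 (not_not.mp (fun hh => h (hk.mpr hh))).symm
      rw [if_neg hxw, if_neg hyw, if_neg hax, if_neg hay]
    · have hxw : ((c, d, a) : Fin n₁ × Fin n₂ × Fin n₃) ≠ w :=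
        fun h => hwa (congrArg (fun z => z.2.2) h).symm
      have hyw : ((c, d, b) : Fin n₁ × Fin n₂ × Fin n₃) ≠ w :=
        fun h => hwb (congrArg (fun z => z.2.2) h).symm
      rw [if_neg hxw, if_neg hyw]
      by_cases hadj : c ≠ w.1 ∧ d ≠ w.2.1
      · rw [if_pos ⟨hadj.1, hadj.2, fun h => hwa h.symm⟩,
          if_pos ⟨hadj.1, hadj.2, fun h => hwb h.symm⟩]
      · have hax : ¬ (HG n₁ n₂ n₃).Adj (c, d, a) w := fun h => hadj ⟨h.1, h.2.1⟩
        have hay : ¬ (HG n₁ n₂ n₃).Adj (c, d, b) w := fun h => hadj ⟨h.1, h.2.1⟩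
        rw [if_neg hax, if_neg hay]


theorem stmt2 (n₁ n₂ n₃ : ℕ) (h₁ : 3 ≤ n₁) (h₂ : 3 ≤ n₂) (h₃ : 3 ≤ n₃)
    (W : Set (Fin n₁ × Fin n₂ × Fin n₃)) (hW : IsResolving W) :
    (∀ a b : Fin n₁, a ≠ b → 3 ≤ (block1 W a).ncard + (block1 W b).ncard) ∧
    (∀ a b : Fin n₂, a ≠ b → 3 ≤ (block2 W a).ncard + (block2 W b).ncard) ∧
    (∀ a b : Fin n₃, a ≠ b → 3 ≤ (block3 W a).ncard + (block3 W b).ncard) := by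
  exact ⟨fun a b hab => core1 h₁ h₂ h₃ W hW a b hab,
    fun a b hab => core2 h₁ h₂ h₃ W hW a b hab,
    fun a b hab => core3 h₁ h₂ h₃ W hW a b hab⟩
end

section
/- Let n₁,n₂,n₃ ≥ 3 and let W be a subset of vertices of HG(n₁,n₂,n₃;3). Suppose there exist a₁ ≠ b₁ in [n₁], a₂ ∈ [n₂], a₃ ∈ [n₃] and landmarks w₁,w₂,w₃,w₄ such that W_{1,a₁} = {w₁,w₂}, W_{1,b₁} = {w₃,w₄}, W_{2,a₂} = {w₂,w₃}, and W_{3,a₃} = {w₁,w₄} (a forbidden 4-cycle with two blue edges). Then the vertices (a₁,a₂,a₃) and (b₁,a₂,a₃) are not in W and are unresolved by W, so W is not a resolving set. -/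
lemma exists_third_s5 {n : ℕ} (h : 3 ≤ n) (u v : Fin n) : ∃ c : Fin n, c ≠ u ∧ c ≠ v := by
  by_contra hc
  push_neg at hc
  have hsub : (Finset.univ : Finset (Fin n)) ⊆ {u, v} := by
    intro x _
    rcases eq_or_ne x u with h' | h'
    · simp [h']
    · simp [hc x h']
  have := Finset.card_le_card hsub
  have h2 : ({u, v} : Finset (Fin n)).card ≤ 2 := (Finset.card_insert_le _ _).trans (by simp)
  simp [Finset.card_univ] at this
  omega

lemma HG_dist_one {n₁ n₂ n₃ : ℕ} {x y : Fin n₁ × Fin n₂ × Fin n₃}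
    (h : (HG n₁ n₂ n₃).Adj x y) : (HG n₁ n₂ n₃).dist x y = 1 :=
  SimpleGraph.dist_eq_one_iff_adj.2 h

lemma HG_dist_two {n₁ n₂ n₃ : ℕ} (h₁ : 3 ≤ n₁) (h₂ : 3 ≤ n₂) (h₃ : 3 ≤ n₃)
    {x y : Fin n₁ × Fin n₂ × Fin n₃} (hxy : x ≠ y) (hna : ¬ (HG n₁ n₂ n₃).Adj x y) :
    (HG n₁ n₂ n₃).dist x y = 2 := by
  obtain ⟨c₁, hc₁x, hc₁y⟩ := exists_third_s5 h₁ x.1 y.1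
  obtain ⟨c₂, hc₂x, hc₂y⟩ := exists_third_s5 h₂ x.2.1 y.2.1
  obtain ⟨c₃, hc₃x, hc₃y⟩ := exists_third_s5 h₃ x.2.2 y.2.2
  have hxz : (HG n₁ n₂ n₃).Adj x (c₁, c₂, c₃) := ⟨hc₁x.symm, hc₂x.symm, hc₃x.symm⟩
  have hzy : (HG n₁ n₂ n₃).Adj (c₁, c₂, c₃) y := ⟨hc₁y, hc₂y, hc₃y⟩
  have hle : (HG n₁ n₂ n₃).dist x y ≤ 2 :=
    SimpleGraph.dist_le (SimpleGraph.Walk.cons hxz (SimpleGraph.Walk.cons hzy .nil))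
  have hne0 : (HG n₁ n₂ n₃).dist x y ≠ 0 := by
    intro h0
    rw [SimpleGraph.dist_eq_zero_iff_eq_or_not_reachable] at h0
    rcases h0 with h0 | h0
    · exact hxy h0
    · exact h0 ⟨SimpleGraph.Walk.cons hxz (SimpleGraph.Walk.cons hzy .nil)⟩
  have hne1 : (HG n₁ n₂ n₃).dist x y ≠ 1 := fun h =>
    hna (SimpleGraph.dist_eq_one_iff_adj.1 h)
  omega

theorem stmt5 (n₁ n₂ n₃ : ℕ) (h₁ : 3 ≤ n₁) (h₂ : 3 ≤ n₂) (h₃ : 3 ≤ n₃)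
    (W : Set (Fin n₁ × Fin n₂ × Fin n₃))
    (a₁ b₁ : Fin n₁) (hab : a₁ ≠ b₁) (a₂ : Fin n₂) (a₃ : Fin n₃)
    (w₁ w₂ w₃ w₄ : Fin n₁ × Fin n₂ × Fin n₃)
    (hdist : List.Pairwise (· ≠ ·) [w₁, w₂, w₃, w₄])
    (hB₁ : block1 W a₁ = {w₁, w₂}) (hB₂ : block1 W b₁ = {w₃, w₄})
    (hB₃ : block2 W a₂ = {w₂, w₃}) (hB₄ : block3 W a₃ = {w₁, w₄}) :
    (a₁, a₂, a₃) ∉ W ∧ (b₁, a₂, a₃) ∉ W ∧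
    (∀ w ∈ W, (HG n₁ n₂ n₃).dist (a₁, a₂, a₃) w = (HG n₁ n₂ n₃).dist (b₁, a₂, a₃) w) ∧
    ¬ IsResolving W := by
  simp only [List.pairwise_cons, List.mem_cons, List.mem_singleton, List.not_mem_nil] at hdist
  obtain ⟨h12, h13, h14, h23, h24, h34⟩ :
      w₁ ≠ w₂ ∧ w₁ ≠ w₃ ∧ w₁ ≠ w₄ ∧ w₂ ≠ w₃ ∧ w₂ ≠ w₄ ∧ w₃ ≠ w₄ := by
    refine ⟨hdist.1 w₂ ?_, hdist.1 w₃ ?_, hdist.1 w₄ ?_, hdist.2.1 w₃ ?_,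
      hdist.2.1 w₄ ?_, hdist.2.2.1 w₄ ?_⟩ <;> simp
  have m1 : w₁ ∈ block1 W a₁ := by rw [hB₁]; simp
  have m2 : w₂ ∈ block1 W a₁ := by rw [hB₁]; simp
  have m3 : w₃ ∈ block1 W b₁ := by rw [hB₂]; simp
  have m4 : w₄ ∈ block1 W b₁ := by rw [hB₂]; simp
  have m5 : w₂ ∈ block2 W a₂ := by rw [hB₃]; simp
  have m6 : w₃ ∈ block2 W a₂ := by rw [hB₃]; simp
  have m7 : w₁ ∈ block3 W a₃ := by rw [hB₄]; simp
  have m8 : w₄ ∈ block3 W a₃ := by rw [hB₄]; simp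
  set x : Fin n₁ × Fin n₂ × Fin n₃ := (a₁, a₂, a₃) with hxdef
  set y : Fin n₁ × Fin n₂ × Fin n₃ := (b₁, a₂, a₃) with hydef
  have hx : x ∉ W := by
    intro hxW
    have e1 : x ∈ ({w₁, w₂} : Set _) := by rw [← hB₁]; exact ⟨hxW, rfl⟩
    have e2 : x ∈ ({w₂, w₃} : Set _) := by rw [← hB₃]; exact ⟨hxW, rfl⟩
    have e3 : x ∈ ({w₁, w₄} : Set _) := by rw [← hB₄]; exact ⟨hxW, rfl⟩
    rcases e1 with rfl | rfl
    · rcases e2 with h | h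
      · exact h12 h
      · exact h13 h
    · rcases e3 with h | h
      · exact h12 h.symm
      · exact h24 h
  have hy : y ∉ W := by
    intro hyW
    have e1 : y ∈ ({w₃, w₄} : Set _) := by rw [← hB₂]; exact ⟨hyW, rfl⟩
    have e2 : y ∈ ({w₂, w₃} : Set _) := by rw [← hB₃]; exact ⟨hyW, rfl⟩
    have e3 : y ∈ ({w₁, w₄} : Set _) := by rw [← hB₄]; exact ⟨hyW, rfl⟩
    rcases e1 with rfl | rfl
    · rcases e3 with h | h
      · exact h13 h.symm
      · exact h34 h
    · rcases e2 with h | h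
      · exact h24 h.symm
      · exact h34 h.symm
  have key : ∀ w ∈ W, (HG n₁ n₂ n₃).dist x w = (HG n₁ n₂ n₃).dist y w := by
    intro w hw
    have hwx : x ≠ w := fun h => hx (h ▸ hw)
    have hwy : y ≠ w := fun h => hy (h ▸ hw)
    by_cases hca : w.1 = a₁
    · have hw12 : w ∈ ({w₁, w₂} : Set _) := by rw [← hB₁]; exact ⟨hw, hca⟩
      have dx : (HG n₁ n₂ n₃).dist x w = 2 :=
        HG_dist_two h₁ h₂ h₃ hwx (fun hadj => hadj.1 hca.symm)
      have dy : (HG n₁ n₂ n₃).dist y w = 2 := by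
        refine HG_dist_two h₁ h₂ h₃ hwy (fun hadj => ?_)
        rcases hw12 with rfl | rfl
        · exact hadj.2.2 m7.2.symm
        · exact hadj.2.1 m5.2.symm
      rw [dx, dy]
    · by_cases hcb : w.1 = b₁
      · have hw34 : w ∈ ({w₃, w₄} : Set _) := by rw [← hB₂]; exact ⟨hw, hcb⟩
        have dy : (HG n₁ n₂ n₃).dist y w = 2 :=
          HG_dist_two h₁ h₂ h₃ hwy (fun hadj => hadj.1 hcb.symm)
        have dx : (HG n₁ n₂ n₃).dist x w = 2 := by
          refine HG_dist_two h₁ h₂ h₃ hwx (fun hadj => ?_)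
          rcases hw34 with rfl | rfl
          · exact hadj.2.1 m6.2.symm
          · exact hadj.2.2 m8.2.symm
        rw [dx, dy]
      · have hn2 : w.2.1 ≠ a₂ := by
          intro h
          have : w ∈ ({w₂, w₃} : Set _) := by rw [← hB₃]; exact ⟨hw, h⟩
          rcases this with rfl | rfl
          · exact hca m2.2
          · exact hcb m3.2
        have hn3 : w.2.2 ≠ a₃ := by
          intro h
          have : w ∈ ({w₁, w₄} : Set _) := by rw [← hB₄]; exact ⟨hw, h⟩
          rcases this with rfl | rfl
          · exact hca m1.2
          · exact hcb m4.2
        have dx : (HG n₁ n₂ n₃).dist x w = 1 :=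
          HG_dist_one ⟨fun h => hca h.symm, fun h => hn2 h.symm, fun h => hn3 h.symm⟩
        have dy : (HG n₁ n₂ n₃).dist y w = 1 :=
          HG_dist_one ⟨fun h => hcb h.symm, fun h => hn2 h.symm, fun h => hn3 h.symm⟩
        rw [dx, dy]
  refine ⟨hx, hy, key, fun hres => ?_⟩
  obtain ⟨w, hw, hne⟩ := hres x y hx hy (fun h => hab (congrArg Prod.fst h))
  exact hne (key w hw)
end

section
/- For every k ≥ 6 there exists a 3-regular simple graph G on 2k vertices together with a proper 3-edge-coloring c (adjacent edges receive different colors from {1,2,3}) such that G contains: no 4-cycle whose edges use all three colors; no 6-cycle in which each pair of opposite edges has the same color and the three colors around the cycle are all distinct (pattern 1,2,3,1,2,3); and no triangle whose three edges have three distinct colors. -/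
/-- `G` is a cubic (3-regular) graph: every vertex has exactly three neighbors. -/
def CubicGraph {V : Type*} (G : SimpleGraph V) : Prop :=
  ∀ v : V, (G.neighborSet v).ncard = 3

/-- `c` is a proper 3-edge-coloring of `G`: distinct edges sharing a vertex get
different colors. -/
def ProperEdgeColoring {V : Type*} (G : SimpleGraph V) (c : Sym2 V → Fin 3) : Prop :=
  ∀ e₁ ∈ G.edgeSet, ∀ e₂ ∈ G.edgeSet, e₁ ≠ e₂ → (∃ v, v ∈ e₁ ∧ v ∈ e₂) → c e₁ ≠ c e₂

/-- A 4-cycle whose four edges use all three colors. -/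
def HasRainbowC4 {V : Type*} (G : SimpleGraph V) (c : Sym2 V → Fin 3) : Prop :=
  ∃ v₁ v₂ v₃ v₄ : V, List.Pairwise (· ≠ ·) [v₁, v₂, v₃, v₄] ∧
    G.Adj v₁ v₂ ∧ G.Adj v₂ v₃ ∧ G.Adj v₃ v₄ ∧ G.Adj v₄ v₁ ∧
    (∀ col : Fin 3,
      col = c s(v₁, v₂) ∨ col = c s(v₂, v₃) ∨ col = c s(v₃, v₄) ∨ col = c s(v₄, v₁))

/-- A 6-cycle in which opposite edges have the same color and the three colors
around the cycle are pairwise distinct (pattern 1,2,3,1,2,3). -/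
def HasBadC6 {V : Type*} (G : SimpleGraph V) (c : Sym2 V → Fin 3) : Prop :=
  ∃ v₁ v₂ v₃ v₄ v₅ v₆ : V, List.Pairwise (· ≠ ·) [v₁, v₂, v₃, v₄, v₅, v₆] ∧
    G.Adj v₁ v₂ ∧ G.Adj v₂ v₃ ∧ G.Adj v₃ v₄ ∧ G.Adj v₄ v₅ ∧ G.Adj v₅ v₆ ∧ G.Adj v₆ v₁ ∧
    c s(v₁, v₂) = c s(v₄, v₅) ∧ c s(v₂, v₃) = c s(v₅, v₆) ∧ c s(v₃, v₄) = c s(v₆, v₁) ∧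
    c s(v₁, v₂) ≠ c s(v₂, v₃) ∧ c s(v₂, v₃) ≠ c s(v₃, v₄) ∧ c s(v₁, v₂) ≠ c s(v₃, v₄)

/-- A triangle whose three edges have three distinct colors. -/
def HasRainbowC3 {V : Type*} (G : SimpleGraph V) (c : Sym2 V → Fin 3) : Prop :=
  ∃ v₁ v₂ v₃ : V, List.Pairwise (· ≠ ·) [v₁, v₂, v₃] ∧
    G.Adj v₁ v₂ ∧ G.Adj v₂ v₃ ∧ G.Adj v₃ v₁ ∧
    c s(v₁, v₂) ≠ c s(v₂, v₃) ∧ c s(v₂, v₃) ≠ c s(v₃, v₁) ∧ c s(v₁, v₂) ≠ c s(v₃, v₁)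


namespace S10

variable {k : ℕ}

lemma castz (hk : 6 ≤ k) {a b : ℕ} : ((a:ℕ) : ZMod (2*k)) = ((b:ℕ) : ZMod (2*k)) ↔ a % (2*k) = b % (2*k) :=
  ZMod.natCast_eq_natCast_iff' a b (2*k)

lemma modsmall (hk : 6 ≤ k) (a : ℕ) (h : a < 2*(2*k)) :
    a % (2*k) = if a < 2*k then a else a - 2*k := by
  split_ifs with h'
  · exact Nat.mod_eq_of_lt h'
  · rw [Nat.mod_eq_sub_mod (by omega), Nat.mod_eq_of_lt (by omega)]

lemma cast_val (hk : 6 ≤ k) (x : ZMod (2*k)) : ((x.val : ℕ) : ZMod (2*k)) = x := by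
  haveI : NeZero (2*k) := ⟨by omega⟩
  rw [ZMod.natCast_val, ZMod.cast_id]

lemma val_lt' (hk : 6 ≤ k) (x : ZMod (2*k)) : x.val < 2*k := by
  haveI : NeZero (2*k) := ⟨by omega⟩
  exact ZMod.val_lt x

lemma nz (hk : 6 ≤ k) {m : ℕ} (h1 : 0 < m) (h2 : m < 2*k) : ((m:ℕ) : ZMod (2*k)) ≠ 0 := by
  intro h
  rw [show (0 : ZMod (2*k)) = ((0:ℕ) : ZMod (2*k)) by simp, castz hk] at h
  rw [Nat.mod_eq_of_lt h2, Nat.zero_mod] at h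
  omega

lemma two_ne_zero' (hk : 6 ≤ k) : (2 : ZMod (2*k)) ≠ 0 := by
  have := nz hk (m := 2) (by omega) (by omega)
  simpa using this

lemma neg_one_ne_one' (hk : 6 ≤ k) : (-1 : ZMod (2*k)) ≠ 1 := by
  intro h
  have : (2 : ZMod (2*k)) = 0 := by linear_combination -h
  exact two_ne_zero' hk this

/-- parity color of a vertex -/
def par (k : ℕ) (x : ZMod (2*k)) : Fin 3 := if x.val % 2 = 0 then 0 else 1

lemma par_ne_two (x : ZMod (2*k)) : par k x ≠ 2 := by
  unfold par; split_ifs <;> decide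

lemma par01 (x : ZMod (2*k)) : par k x = 0 ∨ par k x = 1 := by
  unfold par; split_ifs <;> simp

lemma val_add_one (hk : 6 ≤ k) (x : ZMod (2*k)) : (x + 1).val = (x.val + 1) % (2*k) := by
  haveI : NeZero (2*k) := ⟨by omega⟩
  haveI : Fact (1 < 2*k) := ⟨by omega⟩
  rw [ZMod.val_add, ZMod.val_one]

lemma par_flip (hk : 6 ≤ k) (x : ZMod (2*k)) : par k (x + 1) ≠ par k x := by
  have h1 : (x + 1).val % 2 = (x.val + 1) % 2 := by
    rw [val_add_one hk, Nat.mod_mod_of_dvd _ ⟨k, rfl⟩]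
  unfold par
  rw [h1]
  by_cases hx : x.val % 2 = 0
  · rw [if_neg (by omega), if_pos hx]; decide
  · rw [if_pos (by omega), if_neg hx]; decide


/-- rim color of edge {x, x+s} for s = ±1 -/
def rc (k : ℕ) (x s : ZMod (2*k)) : Fin 3 := if s = 1 then par k x else par k (x - 1)

lemma rc_ne_two (x s : ZMod (2*k)) : rc k x s ≠ 2 := by
  unfold rc; split_ifs <;> exact par_ne_two _

lemma rc01 (x s : ZMod (2*k)) : rc k x s = 0 ∨ rc k x s = 1 := by
  unfold rc; split_ifs <;> exact par01 _

lemma rc_one (x : ZMod (2*k)) : rc k x 1 = par k x := by simp [rc]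

lemma rc_neg_one (hk : 6 ≤ k) (x : ZMod (2*k)) : rc k x (-1) = par k (x - 1) := by
  rw [rc, if_neg (neg_one_ne_one' hk)]

/-- colors of consecutive rim edges traversed in the same direction differ -/
lemma L1same (hk : 6 ≤ k) (x s : ZMod (2*k)) (hs : s = 1 ∨ s = -1) :
    rc k x s ≠ rc k (x + s) s := by
  rcases hs with rfl | rfl
  · rw [rc_one, rc_one]
    exact (par_flip hk x).symm
  · rw [rc_neg_one hk, rc_neg_one hk]
    have h : x - 1 = (x + -1 - 1) + 1 := by ring
    rw [h]
    exact par_flip hk _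

lemma L1 (hk : 6 ≤ k) (x s t : ZMod (2*k)) (hs : s = 1 ∨ s = -1) (ht : t = 1 ∨ t = -1)
    (h : rc k x s ≠ rc k (x + s) t) : s = t := by
  rcases hs with rfl | rfl <;> rcases ht with rfl | rfl
  · rfl
  · exfalso; apply h
    rw [rc_one, rc_neg_one hk, show x + 1 - 1 = x by ring]
  · exfalso; apply h
    rw [rc_neg_one hk, rc_one, show x + -1 = x - 1 by ring]
  · rfl

lemma L2 (hk : 6 ≤ k) (x s : ZMod (2*k)) (hs : s = 1 ∨ s = -1) :
    rc k x s = rc k (x + s) (-s) := by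
  rcases hs with rfl | rfl
  · rw [rc_one, rc_neg_one hk, show x + 1 - 1 = x by ring]
  · rw [rc_neg_one hk, show -(-1 : ZMod (2*k)) = 1 by ring, rc_one, show x + -1 = x - 1 by ring]

/-- the edge coloring -/
def col (k : ℕ) (σ : ZMod (2*k) → ZMod (2*k)) : Sym2 (ZMod (2*k)) → Fin 3 :=
  Sym2.lift ⟨fun x y =>
    if y = x + 1 ∧ ¬ x = y + 1 then par k x
    else if x = y + 1 ∧ ¬ y = x + 1 then par k y else 2, by
      intro a b
      dsimp only
      by_cases h1 : b = a + 1 <;> by_cases h2 : a = b + 1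
      · rw [if_neg (by tauto), if_neg (by tauto), if_neg (by tauto), if_neg (by tauto)]
      · rw [if_pos ⟨h1, h2⟩, if_neg (by tauto), if_pos ⟨h1, h2⟩]
      · rw [if_neg (by tauto), if_pos ⟨h2, h1⟩, if_pos ⟨h2, h1⟩]
      · rw [if_neg (by tauto), if_neg (by tauto), if_neg (by tauto), if_neg (by tauto)]⟩

lemma col_rim (hk : 6 ≤ k) (σ : ZMod (2*k) → ZMod (2*k)) (x s : ZMod (2*k))
    (hs : s = 1 ∨ s = -1) : col k σ s(x, x + s) = rc k x s := by
  have h2 : (2 : ZMod (2*k)) ≠ 0 := two_ne_zero' hk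
  rw [col, Sym2.lift_mk]
  dsimp only
  rcases hs with rfl | rfl
  · rw [if_pos ⟨rfl, fun h => h2 (by linear_combination -h)⟩, rc_one]
  · rw [if_neg (fun h => h2 (by linear_combination -h.1)),
      if_pos ⟨by ring, fun h => h2 (by linear_combination -h)⟩,
      rc_neg_one hk, show x + -1 = x - 1 by ring]

lemma col_chord (hk : 6 ≤ k) (σ : ZMod (2*k) → ZMod (2*k)) (x : ZMod (2*k))
    (h1 : σ x ≠ x + 1) (h2 : σ x ≠ x - 1) : col k σ s(x, σ x) = 2 := by
  rw [col, Sym2.lift_mk]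
  dsimp only
  rw [if_neg (fun h => h1 h.1), if_neg (fun h => h2 (by linear_combination -h.1))]


/-- hypotheses on the chord involution -/
structure Hyp (k : ℕ) (σ : ZMod (2*k) → ZMod (2*k)) : Prop where
  inv : ∀ x, σ (σ x) = x
  hne : ∀ (x j : ZMod (2*k)), (j = 0 ∨ j = 1 ∨ j = -1 ∨ j = 2 ∨ j = -2 ∨ j = 3 ∨ j = -3) →
    σ x ≠ x + j
  h6 : ∀ (x a b : ZMod (2*k)), (a = 1 ∨ a = -1) → (b = 1 ∨ b = -1) →
    σ (x + a) = σ x + b → rc k x a = rc k (σ x) b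
  h7 : ∀ (x a b : ZMod (2*k)), (a = 1 ∨ a = -1) → (b = 1 ∨ b = -1) →
    σ (x + a + a) = σ x - b - b → rc k x a ≠ rc k (σ x - b - b) b

variable {σ : ZMod (2*k) → ZMod (2*k)}

lemma Hyp.ne_self (H : Hyp k σ) (x : ZMod (2*k)) : σ x ≠ x := by
  have := H.hne x 0 (by tauto); simpa using this

lemma Hyp.ne_add_one (H : Hyp k σ) (x : ZMod (2*k)) : σ x ≠ x + 1 := H.hne x 1 (by tauto)

lemma Hyp.ne_sub_one (H : Hyp k σ) (x : ZMod (2*k)) : σ x ≠ x - 1 := by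
  have := H.hne x (-1) (by tauto)
  intro h; exact this (by linear_combination h)

lemma Hyp.sum2 (H : Hyp k σ) (x s t : ZMod (2*k)) (hs : s = 1 ∨ s = -1)
    (ht : t = 1 ∨ t = -1) : σ x ≠ x + s + t := by
  intro h
  rcases hs with rfl | rfl <;> rcases ht with rfl | rfl
  · exact H.hne x 2 (by tauto) (by linear_combination h)
  · exact H.hne x 0 (by tauto) (by linear_combination h)
  · exact H.hne x 0 (by tauto) (by linear_combination h)
  · exact H.hne x (-2) (by tauto) (by linear_combination h)

lemma Hyp.sum3 (H : Hyp k σ) (x s t u : ZMod (2*k)) (hs : s = 1 ∨ s = -1)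
    (ht : t = 1 ∨ t = -1) (hu : u = 1 ∨ u = -1) : σ x ≠ x + s + t + u := by
  intro h
  rcases hs with rfl | rfl <;> rcases ht with rfl | rfl <;> rcases hu with rfl | rfl
  · exact H.hne x 3 (by tauto) (by linear_combination h)
  · exact H.hne x 1 (by tauto) (by linear_combination h)
  · exact H.hne x 1 (by tauto) (by linear_combination h)
  · exact H.hne x (-1) (by tauto) (by linear_combination h)
  · exact H.hne x 1 (by tauto) (by linear_combination h)
  · exact H.hne x (-1) (by tauto) (by linear_combination h)
  · exact H.hne x (-1) (by tauto) (by linear_combination h)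
  · exact H.hne x (-3) (by tauto) (by linear_combination h)

/-- the graph: rim cycle plus chords -/
def graph (k : ℕ) (hk : 6 ≤ k) (σ : ZMod (2*k) → ZMod (2*k)) (H : Hyp k σ) :
    SimpleGraph (ZMod (2*k)) where
  Adj x y := y = x + 1 ∨ y = x - 1 ∨ y = σ x
  symm := by
    refine ⟨fun x y h => ?_⟩
    rcases h with h | h | h
    · right; left; rw [h]; ring
    · left; rw [h]; ring
    · right; right; rw [h, H.inv]
  loopless := by
    refine ⟨fun x h => ?_⟩
    rcases h with h | h | h
    · exact two_ne_zero' hk (by linear_combination -2*h)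
    · exact two_ne_zero' hk (by linear_combination 2*h)
    · exact H.ne_self x h.symm

lemma adj_iff (hk : 6 ≤ k) (H : Hyp k σ) (x y : ZMod (2*k)) :
    (graph k hk σ H).Adj x y ↔ (y = x + 1 ∨ y = x - 1 ∨ y = σ x) := Iff.rfl

/-- classification of an edge: chord with color 2, or rim step with rim color -/
lemma classify (hk : 6 ≤ k) (H : Hyp k σ) {x y : ZMod (2*k)}
    (h : (graph k hk σ H).Adj x y) :
    (y = σ x ∧ col k σ s(x, y) = 2) ∨
    (∃ s, (s = 1 ∨ s = -1) ∧ y = x + s ∧ col k σ s(x, y) = rc k x s) := by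
  rcases h with h | h | h
  · right
    exact ⟨1, Or.inl rfl, h, by rw [h, col_rim hk σ x 1 (Or.inl rfl)]⟩
  · right
    refine ⟨-1, Or.inr rfl, by rw [h]; ring, ?_⟩
    rw [show y = x + -1 by rw [h]; ring, col_rim hk σ x (-1) (Or.inr rfl)]
  · left
    exact ⟨h, by rw [h]; exact col_chord hk σ x (H.ne_add_one x) (H.ne_sub_one x)⟩

lemma chord_of_two (hk : 6 ≤ k) (H : Hyp k σ) {x y : ZMod (2*k)}
    (h : (graph k hk σ H).Adj x y) (hc : col k σ s(x, y) = 2) : y = σ x := by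
  rcases classify hk H h with ⟨h1, _⟩ | ⟨s, hs, hxy, hcol⟩
  · exact h1
  · exact absurd (hcol ▸ hc) (rc_ne_two x s)

lemma rim_of_ne_two (hk : 6 ≤ k) (H : Hyp k σ) {x y : ZMod (2*k)}
    (h : (graph k hk σ H).Adj x y) (hc : col k σ s(x, y) ≠ 2) :
    ∃ s, (s = 1 ∨ s = -1) ∧ y = x + s ∧ col k σ s(x, y) = rc k x s := by
  rcases classify hk H h with ⟨h1, h2⟩ | h'
  · exact absurd h2 hc
  · exact h'


lemma pmneg {s : ZMod (2*k)} (hs : s = 1 ∨ s = -1) : -s = 1 ∨ -s = -1 := by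
  rcases hs with rfl | rfl
  · right; ring
  · left; ring


theorem no_c3 (hk : 6 ≤ k) (H : Hyp k σ) : ¬ HasRainbowC3 (graph k hk σ H) (col k σ) := by
  rintro ⟨v1, v2, v3, hd, h12, h23, h31, n1, n2, n3⟩
  rw [List.pairwise_cons, List.pairwise_cons] at hd
  have d12 : v1 ≠ v2 := hd.1 v2 (by simp)
  have d13 : v1 ≠ v3 := hd.1 v3 (by simp)
  have d23 : v2 ≠ v3 := hd.2.1 v3 (by simp)
  rcases classify hk H h12 with ⟨e1, c1⟩ | ⟨s1, hs1, e1, c1⟩ <;>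
    rcases classify hk H h23 with ⟨e2, c2⟩ | ⟨s2, hs2, e2, c2⟩ <;>
    rcases classify hk H h31 with ⟨e3, c3⟩ | ⟨s3, hs3, e3, c3⟩
  -- CCC
  · exact d13 (by rw [e2, e1, H.inv])
  -- CCR
  · exact d13 (by rw [e2, e1, H.inv])
  -- CRC
  · exact d23 (by rw [e1, e3, H.inv])
  -- CRR : chord at edge 1
  · exact H.sum2 v1 (-s3) (-s2) (pmneg hs3) (pmneg hs2)
      (by linear_combination -e1 - e2 - e3)
  -- RCC
  · exact d12 (by rw [e3, e2, H.inv])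
  -- RCR : chord at edge 2
  · exact H.sum2 v2 (-s1) (-s3) (pmneg hs1) (pmneg hs3)
      (by linear_combination -e1 - e2 - e3)
  -- RRC : chord at edge 3
  · exact H.sum2 v3 (-s2) (-s1) (pmneg hs2) (pmneg hs1)
      (by linear_combination -e1 - e2 - e3)
  -- RRR
  · rw [c1, c2] at n1
    rw [c2, c3] at n2
    rw [c1, c3] at n3
    rcases rc01 v1 s1 with a | a <;> rcases rc01 v2 s2 with b | b <;>
      rcases rc01 v3 s3 with c | c <;>
      first
        | exact n1 (a.trans b.symm)
        | exact n2 (b.trans c.symm)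
        | exact n3 (a.trans c.symm)


theorem no_c4 (hk : 6 ≤ k) (H : Hyp k σ) : ¬ HasRainbowC4 (graph k hk σ H) (col k σ) := by
  rintro ⟨v1, v2, v3, v4, hd, h12, h23, h34, h41, hall⟩
  rw [List.pairwise_cons, List.pairwise_cons, List.pairwise_cons] at hd
  have d13 : v1 ≠ v3 := hd.1 v3 (by simp)
  have d24 : v2 ≠ v4 := hd.2.1 v4 (by simp)
  rcases classify hk H h12 with ⟨e1, c1⟩ | ⟨s1, hs1, e1, c1⟩ <;>
    rcases classify hk H h23 with ⟨e2, c2⟩ | ⟨s2, hs2, e2, c2⟩ <;>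
    rcases classify hk H h34 with ⟨e3, c3⟩ | ⟨s3, hs3, e3, c3⟩ <;>
    rcases classify hk H h41 with ⟨e4, c4⟩ | ⟨s4, hs4, e4, c4⟩
  -- CCCC
  · exact d13 (by rw [e2, e1, H.inv])
  -- CCCR
  · exact d13 (by rw [e2, e1, H.inv])
  -- CCRC
  · exact d13 (by rw [e2, e1, H.inv])
  -- CCRR
  · exact d13 (by rw [e2, e1, H.inv])
  -- CRCC : e3,e4 adjacent chords
  · exact d13 (by rw [e4, e3, H.inv])
  -- CRCR : opposite chords e1,e3
  · have hv1 : σ v2 = v1 := by rw [e1, H.inv]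
    have key : σ (v2 + s2) = σ v2 + -s4 := by
      rw [← e2, ← e3, hv1]
      linear_combination -e4
    have hcc := H.h6 v2 s2 (-s4) hs2 (pmneg hs4) key
    have hA : rc k v4 s4 = rc k v2 s2 := by
      rw [L2 hk v4 s4 hs4, ← e4, ← hv1, ← hcc]
    rcases rc01 v2 s2 with hp | hp
    · rcases hall 1 with h | h | h | h
      · rw [c1] at h; exact absurd h (by decide)
      · rw [c2, hp] at h; exact absurd h (by decide)
      · rw [c3] at h; exact absurd h (by decide)
      · rw [c4, hA, hp] at h; exact absurd h (by decide)
    · rcases hall 0 with h | h | h | h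
      · rw [c1] at h; exact absurd h (by decide)
      · rw [c2, hp] at h; exact absurd h (by decide)
      · rw [c3] at h; exact absurd h (by decide)
      · rw [c4, hA, hp] at h; exact absurd h (by decide)
  -- CRRC : e4,e1 adjacent chords
  · exact d24 (by rw [e1, e4, H.inv])
  -- CRRR : single chord e1
  · exact H.sum3 v1 (-s4) (-s3) (-s2) (pmneg hs4) (pmneg hs3) (pmneg hs2)
      (by linear_combination -e1 - e2 - e3 - e4)
  -- RCCC : e2,e3 adjacent
  · exact d24 (by rw [e3, e2, H.inv])
  -- RCCR
  · exact d24 (by rw [e3, e2, H.inv])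
  -- RCRC : opposite chords e2,e4
  · have hx : v2 + -s1 = v1 := by linear_combination e1
    have hy : σ v1 = v4 := by rw [e4, H.inv]
    have key : σ (v2 + -s1) = σ v2 + s3 := by rw [hx, hy, e3, e2]
    have hcc := H.h6 v2 (-s1) s3 (pmneg hs1) hs3 key
    have hA : rc k v1 s1 = rc k v3 s3 := by
      rw [L2 hk v1 s1 hs1, ← e1, hcc, ← e2]
    rcases rc01 v1 s1 with hp | hp
    · rcases hall 1 with h | h | h | h
      · rw [c1, hp] at h; exact absurd h (by decide)
      · rw [c2] at h; exact absurd h (by decide)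
      · rw [c3, ← hA, hp] at h; exact absurd h (by decide)
      · rw [c4] at h; exact absurd h (by decide)
    · rcases hall 0 with h | h | h | h
      · rw [c1, hp] at h; exact absurd h (by decide)
      · rw [c2] at h; exact absurd h (by decide)
      · rw [c3, ← hA, hp] at h; exact absurd h (by decide)
      · rw [c4] at h; exact absurd h (by decide)
  -- RCRR : single chord e2
  · exact H.sum3 v2 (-s1) (-s4) (-s3) (pmneg hs1) (pmneg hs4) (pmneg hs3)
      (by linear_combination -e1 - e2 - e3 - e4)
  -- RRCC : e3,e4 adjacent
  · exact d13 (by rw [e4, e3, H.inv])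
  -- RRCR : single chord e3
  · exact H.sum3 v3 (-s2) (-s1) (-s4) (pmneg hs2) (pmneg hs1) (pmneg hs4)
      (by linear_combination -e1 - e2 - e3 - e4)
  -- RRRC : single chord e4
  · exact H.sum3 v4 (-s3) (-s2) (-s1) (pmneg hs3) (pmneg hs2) (pmneg hs1)
      (by linear_combination -e1 - e2 - e3 - e4)
  -- RRRR
  · rcases hall 2 with h | h | h | h
    · rw [c1] at h; exact rc_ne_two _ _ h.symm
    · rw [c2] at h; exact rc_ne_two _ _ h.symm
    · rw [c3] at h; exact rc_ne_two _ _ h.symm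
    · rw [c4] at h; exact rc_ne_two _ _ h.symm


/-- kills a C6 whose chords are the (rotated-to-first) opposite pair -/
lemma oppkill (hk : 6 ≤ k) (H : Hyp k σ) (w1 w2 w3 w4 w5 w6 : ZMod (2*k))
    (hc1 : w2 = σ w1) (hc4 : w5 = σ w4)
    (s2 s3 s5 s6 : ZMod (2*k))
    (hs2 : s2 = 1 ∨ s2 = -1) (hs3 : s3 = 1 ∨ s3 = -1)
    (hs5 : s5 = 1 ∨ s5 = -1) (hs6 : s6 = 1 ∨ s6 = -1)
    (e2 : w3 = w2 + s2) (e3 : w4 = w3 + s3) (e5 : w6 = w5 + s5) (e6 : w1 = w6 + s6)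
    (hne23 : rc k w2 s2 ≠ rc k w3 s3) (hne56 : rc k w5 s5 ≠ rc k w6 s6)
    (heq25 : rc k w2 s2 = rc k w5 s5) : False := by
  have hss : s2 = s3 := L1 hk w2 s2 s3 hs2 hs3 (by rw [e2] at hne23; exact hne23)
  have huu : s5 = s6 := L1 hk w5 s5 s6 hs5 hs6 (by rw [e5] at hne56; exact hne56)
  have hw1 : σ w2 = w1 := by rw [hc1, H.inv]
  have hw5 : w5 = σ w2 - s5 - s5 := by
    rw [hw1]; linear_combination -e5 - e6 + huu
  have h4 : w4 = w2 + s2 + s2 := by rw [e3, e2, hss]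
  have key : σ (w2 + s2 + s2) = σ w2 - s5 - s5 := by
    rw [← h4, ← hc4, ← hw5]
  exact H.h7 w2 s2 s5 hs2 hs5 key (by rw [← hw5]; exact heq25)


theorem no_c6 (hk : 6 ≤ k) (H : Hyp k σ) : ¬ HasBadC6 (graph k hk σ H) (col k σ) := by
  rintro ⟨v1, v2, v3, v4, v5, v6, hd, h12, h23, h34, h45, h56, h61, q14, q25, q36, n12, n23, n13⟩
  have tri : ∀ a b d : Fin 3, a ≠ b → b ≠ d → a ≠ d →
      (a = 2 ∧ b ≠ 2 ∧ d ≠ 2) ∨ (b = 2 ∧ a ≠ 2 ∧ d ≠ 2) ∨ (d = 2 ∧ a ≠ 2 ∧ b ≠ 2) := by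
    decide
  rcases tri _ _ _ n12 n23 n13 with ⟨ha, hb, hdd⟩ | ⟨hb, ha, hdd⟩ | ⟨hdd, ha, hb⟩
  · -- chords e1, e4
    have hc1 : v2 = σ v1 := chord_of_two hk H h12 ha
    have hc4 : v5 = σ v4 := chord_of_two hk H h45 (q14.symm.trans ha)
    obtain ⟨s2, hs2, e2, c2⟩ := rim_of_ne_two hk H h23 hb
    obtain ⟨s3, hs3, e3, c3⟩ := rim_of_ne_two hk H h34 hdd
    obtain ⟨s5, hs5, e5, c5⟩ := rim_of_ne_two hk H h56 (fun h => hb (q25.trans h))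
    obtain ⟨s6, hs6, e6, c6⟩ := rim_of_ne_two hk H h61 (fun h => hdd (q36.trans h))
    exact oppkill hk H v1 v2 v3 v4 v5 v6 hc1 hc4 s2 s3 s5 s6 hs2 hs3 hs5 hs6 e2 e3 e5 e6
      (by rw [← c2, ← c3]; exact n23)
      (by rw [← c5, ← c6, ← q25, ← q36]; exact n23)
      (by rw [← c2, ← c5]; exact q25)
  · -- chords e2, e5
    have hc1 : v3 = σ v2 := chord_of_two hk H h23 hb
    have hc4 : v6 = σ v5 := chord_of_two hk H h56 (q25.symm.trans hb)
    obtain ⟨s3, hs3, e3, c3⟩ := rim_of_ne_two hk H h34 hdd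
    obtain ⟨s4, hs4, e4, c4⟩ := rim_of_ne_two hk H h45 (fun h => ha (q14.trans h))
    obtain ⟨s6, hs6, e6, c6⟩ := rim_of_ne_two hk H h61 (fun h => hdd (q36.trans h))
    obtain ⟨s1, hs1, e1, c1⟩ := rim_of_ne_two hk H h12 ha
    exact oppkill hk H v2 v3 v4 v5 v6 v1 hc1 hc4 s3 s4 s6 s1 hs3 hs4 hs6 hs1 e3 e4 e6 e1
      (by rw [← c3, ← c4, ← q14]; exact fun h => n13 h.symm)
      (by rw [← c6, ← c1, ← q36]; exact fun h => n13 (h.symm))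
      (by rw [← c3, ← c6]; exact q36)
  · -- chords e3, e6
    have hc1 : v4 = σ v3 := chord_of_two hk H h34 hdd
    have hc4 : v1 = σ v6 := chord_of_two hk H h61 (q36.symm.trans hdd)
    obtain ⟨s4, hs4, e4, c4⟩ := rim_of_ne_two hk H h45 (fun h => ha (q14.trans h))
    obtain ⟨s5, hs5, e5, c5⟩ := rim_of_ne_two hk H h56 (fun h => hb (q25.trans h))
    obtain ⟨s1, hs1, e1, c1⟩ := rim_of_ne_two hk H h12 ha
    obtain ⟨s2, hs2, e2, c2⟩ := rim_of_ne_two hk H h23 hb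
    exact oppkill hk H v3 v4 v5 v6 v1 v2 hc1 hc4 s4 s5 s1 s2 hs4 hs5 hs1 hs2 e4 e5 e1 e2
      (by rw [← c4, ← c5, ← q14, ← q25]; exact n12)
      (by rw [← c1, ← c2]; exact n12)
      (by rw [← c4, ← c1, ← q14])


theorem cubicZ (hk : 6 ≤ k) (H : Hyp k σ) : CubicGraph (graph k hk σ H) := by
  intro x
  have hset : (graph k hk σ H).neighborSet x = {x + 1, x - 1, σ x} := by
    ext y
    simp only [SimpleGraph.mem_neighborSet, Set.mem_insert_iff, Set.mem_singleton_iff]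
    exact adj_iff hk H x y
  rw [hset, Set.ncard_eq_three]
  refine ⟨x + 1, x - 1, σ x, ?_, ?_, ?_, rfl⟩
  · intro h
    exact two_ne_zero' hk (by linear_combination h)
  · exact fun h => H.ne_add_one x h.symm
  · exact fun h => H.ne_sub_one x h.symm

lemma propAux (hk : 6 ≤ k) (H : Hyp k σ) (v x y : ZMod (2*k))
    (hx : (graph k hk σ H).Adj v x) (hy : (graph k hk σ H).Adj v y) (hxy : x ≠ y) :
    col k σ s(v, x) ≠ col k σ s(v, y) := by
  rcases classify hk H hx with ⟨e1, c1⟩ | ⟨s1, hs1, e1, c1⟩ <;>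
    rcases classify hk H hy with ⟨e2, c2⟩ | ⟨s2, hs2, e2, c2⟩
  · exact absurd (e1.trans e2.symm) hxy
  · rw [c1, c2]; exact fun h => rc_ne_two _ _ h.symm
  · rw [c1, c2]; exact rc_ne_two _ _
  · rw [c1, c2]
    have hss : s1 ≠ s2 := fun h => hxy (by rw [e1, e2, h])
    rcases hs1 with rfl | rfl <;> rcases hs2 with rfl | rfl
    · exact absurd rfl hss
    · rw [rc_one, rc_neg_one hk]
      have h := par_flip hk (v - 1)
      rwa [show v - 1 + 1 = v by ring] at h
    · rw [rc_one, rc_neg_one hk]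
      have h := par_flip hk (v - 1)
      rw [show v - 1 + 1 = v by ring] at h
      exact fun h2 => h h2.symm
    · exact absurd rfl hss

theorem properZ (hk : 6 ≤ k) (H : Hyp k σ) :
    ProperEdgeColoring (graph k hk σ H) (col k σ) := by
  have main : ∀ v x y : ZMod (2*k), (graph k hk σ H).Adj v x → (graph k hk σ H).Adj v y →
      s(v, x) ≠ s(v, y) → col k σ s(v, x) ≠ col k σ s(v, y) := by
    intro v x y ax ay hne'
    apply propAux hk H v x y ax ay
    intro h
    exact hne' (by rw [h])
  intro e₁ he₁ e₂ he₂ hne hshare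
  revert he₁ he₂ hne hshare
  refine Sym2.inductionOn₂ e₁ e₂ ?_
  intro a b c d he₁ he₂ hne hshare
  rw [SimpleGraph.mem_edgeSet] at he₁ he₂
  obtain ⟨v, hv1, hv2⟩ := hshare
  rw [Sym2.mem_iff] at hv1 hv2
  rcases hv1 with h1 | h1 <;> rcases hv2 with h2 | h2
  · rw [← h1] at he₁ hne ⊢
    rw [← h2] at he₂ hne ⊢
    exact main v b d he₁ he₂ hne
  · rw [← h1] at he₁ hne ⊢
    rw [← h2] at he₂ hne ⊢
    rw [show s(c, v) = s(v, c) from Sym2.eq_swap] at hne ⊢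
    exact main v b c he₁ he₂.symm hne
  · rw [← h1] at he₁ hne ⊢
    rw [← h2] at he₂ hne ⊢
    rw [show s(a, v) = s(v, a) from Sym2.eq_swap] at hne ⊢
    exact main v a d he₁.symm he₂ hne
  · rw [← h1] at he₁ hne ⊢
    rw [← h2] at he₂ hne ⊢
    rw [show s(a, v) = s(v, a) from Sym2.eq_swap, show s(c, v) = s(v, c) from Sym2.eq_swap]
      at hne ⊢
    exact main v a c he₁.symm he₂.symm hne


/-! ### even case: antipodal chords -/

lemma kk_zero (hk : 6 ≤ k) : ((k:ℕ) : ZMod (2*k)) + ((k:ℕ) : ZMod (2*k)) = 0 := by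
  rw [← Nat.cast_add, show k + k = 2*k by ring, ZMod.natCast_self]

lemma cast_k_ne (hk : 6 ≤ k) {j : ℕ} (hj : j < k) (hj2 : k + j < 2*k ∨ True) :
    True := trivial

/-- (k : ZMod 2k) ≠ small j and ≠ -j -/
lemma k_ne_pos (hk : 6 ≤ k) {j : ℕ} (hj : j < k) : ((k:ℕ) : ZMod (2*k)) ≠ ((j:ℕ) : ZMod (2*k)) := by
  intro h
  rw [castz hk, Nat.mod_eq_of_lt (by omega), Nat.mod_eq_of_lt (by omega)] at h
  omega

lemma k_ne_neg (hk : 6 ≤ k) {j : ℕ} (hj : 0 < j) (hj2 : j < k) :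
    ((k:ℕ) : ZMod (2*k)) ≠ -((j:ℕ) : ZMod (2*k)) := by
  intro h
  have h2 : (((k + j : ℕ)) : ZMod (2*k)) = ((0:ℕ) : ZMod (2*k)) := by
    push_cast
    rw [h]
    ring
  rw [castz hk, Nat.mod_eq_of_lt (by omega), Nat.mod_eq_of_lt (by omega)] at h2
  omega

lemma par_add_k (hk : 6 ≤ k) (hev : k % 2 = 0) (x : ZMod (2*k)) :
    par k (x + ((k:ℕ) : ZMod (2*k))) = par k x := by
  haveI : NeZero (2*k) := ⟨by omega⟩
  have hval : (x + ((k:ℕ) : ZMod (2*k))).val = (x.val + k) % (2*k) := by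
    rw [ZMod.val_add, ZMod.val_natCast_of_lt (by omega)]
  have hpar : (x + ((k:ℕ) : ZMod (2*k))).val % 2 = x.val % 2 := by
    rw [hval, Nat.mod_mod_of_dvd _ ⟨k, rfl⟩]
    omega
  unfold par
  rw [hpar]

lemma rc_add_k (hk : 6 ≤ k) (hev : k % 2 = 0) (x s : ZMod (2*k)) :
    rc k (x + ((k:ℕ) : ZMod (2*k))) s = rc k x s := by
  unfold rc
  split_ifs
  · exact par_add_k hk hev x
  · rw [show x + ((k:ℕ) : ZMod (2*k)) - 1 = (x - 1) + ((k:ℕ) : ZMod (2*k)) by ring]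
    exact par_add_k hk hev (x - 1)

def sigE (k : ℕ) : ZMod (2*k) → ZMod (2*k) := fun x => x + ((k:ℕ) : ZMod (2*k))

lemma hypE (hk : 6 ≤ k) (hev : k % 2 = 0) : Hyp k (sigE k) := by
  constructor
  · intro x
    unfold sigE
    rw [add_assoc, kk_zero hk, add_zero]
  · intro x j hj h
    unfold sigE at h
    have hkj : ((k:ℕ) : ZMod (2*k)) = j := by linear_combination h
    rcases hj with rfl | rfl | rfl | rfl | rfl | rfl | rfl
    · exact k_ne_pos hk (j := 0) (by omega) (by simpa using hkj)
    · exact k_ne_pos hk (j := 1) (by omega) (by simpa using hkj)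
    · exact k_ne_neg hk (j := 1) (by omega) (by omega) (by simpa using hkj)
    · exact k_ne_pos hk (j := 2) (by omega) (by simpa using hkj)
    · exact k_ne_neg hk (j := 2) (by omega) (by omega) (by simpa using hkj)
    · exact k_ne_pos hk (j := 3) (by omega) (by simpa using hkj)
    · exact k_ne_neg hk (j := 3) (by omega) (by omega) (by simpa using hkj)
  · intro x a b ha hb h
    unfold sigE at h
    have hab : a = b := by linear_combination h
    subst hab
    unfold sigE
    rw [rc_add_k hk hev]
  · intro x a b ha hb h
    unfold sigE at h
    have hab : a + a + (b + b) = 0 := by linear_combination h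
    have hba : b = -a := by
      rcases ha with rfl | rfl <;> rcases hb with rfl | rfl
      · exfalso
        apply nz hk (m := 4) (by omega) (by omega)
        push_cast
        linear_combination hab
      · ring
      · ring
      · exfalso
        apply nz hk (m := 4) (by omega) (by omega)
        push_cast
        linear_combination -hab
    subst hba
    unfold sigE
    rw [show x + ((k:ℕ) : ZMod (2*k)) - -a - -a = (x + a + a) + ((k:ℕ) : ZMod (2*k)) by ring,
      rc_add_k hk hev]
    rw [show x + a + a = (x + a) + a by ring, ← L2 hk (x + a) a ha]
    exact L1same hk x a ha


/-! ### odd case: doubling chords -/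

def pOdd (k v : ℕ) : ℕ :=
  if 2*v < k then 2*v + k else if v < k then 2*v else if v % 2 = 1 then (v-k)/2 else v/2

lemma pchar (hk : 6 ≤ k) (hodd : k % 2 = 1) (v : ℕ) (hv : v < 2*k) :
    pOdd k v < 2*k ∧
    ((v < k ∧ 2*v < k ∧ pOdd k v = 2*v + k) ∨ (v < k ∧ k ≤ 2*v ∧ pOdd k v = 2*v) ∨
     (k ≤ v ∧ v % 2 = 1 ∧ 2 * pOdd k v + k = v) ∨ (k ≤ v ∧ v % 2 = 0 ∧ 2 * pOdd k v = v)) := by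
  unfold pOdd
  split_ifs with h1 h2 h3 <;> constructor <;> omega

lemma modsmall' (hk : 6 ≤ k) (a : ℕ) (h : a < 2*(2*k)) :
    (a < 2*k ∧ a % (2*k) = a) ∨ (2*k ≤ a ∧ a % (2*k) = a - 2*k) := by
  rcases Nat.lt_or_ge a (2*k) with h' | h'
  · left; exact ⟨h', Nat.mod_eq_of_lt h'⟩
  · right
    exact ⟨h', by rw [Nat.mod_eq_sub_mod h', Nat.mod_eq_of_lt (by omega)]⟩

def sigO (k : ℕ) : ZMod (2*k) → ZMod (2*k) := fun x => ((pOdd k x.val : ℕ) : ZMod (2*k))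

lemma sigO_eq (x : ZMod (2*k)) : sigO k x = ((pOdd k x.val : ℕ) : ZMod (2*k)) := rfl

lemma sigO_val (hk : 6 ≤ k) (hodd : k % 2 = 1) (x : ZMod (2*k)) :
    (sigO k x).val = pOdd k x.val := by
  haveI : NeZero (2*k) := ⟨by omega⟩
  exact ZMod.val_cast_of_lt (pchar hk hodd x.val (val_lt' hk x)).1

lemma val_add_two (hk : 6 ≤ k) (x : ZMod (2*k)) : (x + 2).val = (x.val + 2) % (2*k) := by
  haveI : NeZero (2*k) := ⟨by omega⟩
  rw [show (2 : ZMod (2*k)) = ((2:ℕ) : ZMod (2*k)) by push_cast; ring, ZMod.val_add,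
    ZMod.val_natCast_of_lt (by omega)]

lemma hypO (hk : 6 ≤ k) (hodd : k % 2 = 1) : Hyp k (sigO k) := by
  haveI : NeZero (2*k) := ⟨by omega⟩
  have hv : ∀ x : ZMod (2*k), x.val < 2*k := val_lt' hk
  have hcv : ∀ x : ZMod (2*k), ((x.val : ℕ) : ZMod (2*k)) = x := cast_val hk
  constructor
  · -- involution
    intro x
    have hx := hv x
    rw [sigO_eq, sigO_eq, ZMod.val_cast_of_lt (pchar hk hodd x.val (hv x)).1]
    have c1 := pchar hk hodd x.val (hv x)
    have c2 := pchar hk hodd (pOdd k x.val) c1.1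
    have : pOdd k (pOdd k x.val) = x.val := by omega
    rw [this, hcv]
  · -- not near
    intro x j hj h
    have hx := hv x
    have c1 := pchar hk hodd x.val (hv x)
    rcases hj with rfl | rfl | rfl | rfl | rfl | rfl | rfl
    · rw [sigO_eq] at h
      have h2 : ((pOdd k x.val + 0 : ℕ) : ZMod (2*k)) = ((x.val + 0 : ℕ) : ZMod (2*k)) := by
        push_cast
        rw [hcv]
        linear_combination h
      rw [castz hk] at h2
      have m1 := modsmall' hk (pOdd k x.val + 0) (by omega)
      have m2 := modsmall' hk (x.val + 0) (by omega)
      omega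
    · rw [sigO_eq] at h
      have h2 : ((pOdd k x.val + 0 : ℕ) : ZMod (2*k)) = ((x.val + 1 : ℕ) : ZMod (2*k)) := by
        push_cast
        rw [hcv]
        linear_combination h
      rw [castz hk] at h2
      have m1 := modsmall' hk (pOdd k x.val + 0) (by omega)
      have m2 := modsmall' hk (x.val + 1) (by omega)
      omega
    · rw [sigO_eq] at h
      have h2 : ((pOdd k x.val + 1 : ℕ) : ZMod (2*k)) = ((x.val + 0 : ℕ) : ZMod (2*k)) := by
        push_cast
        rw [hcv]
        linear_combination h
      rw [castz hk] at h2
      have m1 := modsmall' hk (pOdd k x.val + 1) (by omega)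
      have m2 := modsmall' hk (x.val + 0) (by omega)
      omega
    · rw [sigO_eq] at h
      have h2 : ((pOdd k x.val + 0 : ℕ) : ZMod (2*k)) = ((x.val + 2 : ℕ) : ZMod (2*k)) := by
        push_cast
        rw [hcv]
        linear_combination h
      rw [castz hk] at h2
      have m1 := modsmall' hk (pOdd k x.val + 0) (by omega)
      have m2 := modsmall' hk (x.val + 2) (by omega)
      omega
    · rw [sigO_eq] at h
      have h2 : ((pOdd k x.val + 2 : ℕ) : ZMod (2*k)) = ((x.val + 0 : ℕ) : ZMod (2*k)) := by
        push_cast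
        rw [hcv]
        linear_combination h
      rw [castz hk] at h2
      have m1 := modsmall' hk (pOdd k x.val + 2) (by omega)
      have m2 := modsmall' hk (x.val + 0) (by omega)
      omega
    · rw [sigO_eq] at h
      have h2 : ((pOdd k x.val + 0 : ℕ) : ZMod (2*k)) = ((x.val + 3 : ℕ) : ZMod (2*k)) := by
        push_cast
        rw [hcv]
        linear_combination h
      rw [castz hk] at h2
      have m1 := modsmall' hk (pOdd k x.val + 0) (by omega)
      have m2 := modsmall' hk (x.val + 3) (by omega)
      omega
    · rw [sigO_eq] at h
      have h2 : ((pOdd k x.val + 3 : ℕ) : ZMod (2*k)) = ((x.val + 0 : ℕ) : ZMod (2*k)) := by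
        push_cast
        rw [hcv]
        linear_combination h
      rw [castz hk] at h2
      have m1 := modsmall' hk (pOdd k x.val + 3) (by omega)
      have m2 := modsmall' hk (x.val + 0) (by omega)
      omega
  · -- h6 : vacuous
    intro x a b ha hb h
    exfalso
    have key : ∀ y : ZMod (2*k), ∀ t : ZMod (2*k), (t = 1 ∨ t = -1) →
        sigO k (y + 1) ≠ sigO k y + t := by
      intro y t ht heq
      have hy := hv y
      have hw : (y + 1).val = (y.val + 1) % (2*k) := val_add_one hk y
      have c1 := pchar hk hodd y.val (hv y)
      have mw := modsmall' hk (y.val + 1) (by omega)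
      have c2 := pchar hk hodd ((y.val + 1) % (2*k)) (by omega)
      rcases ht with rfl | rfl
      · have heq2 : ((pOdd k ((y.val + 1) % (2*k)) : ℕ) : ZMod (2*k))
            = ((pOdd k y.val + 1 : ℕ) : ZMod (2*k)) := by
          push_cast
          rw [← hw, ← sigO_eq, ← sigO_eq]
          linear_combination heq
        rw [castz hk] at heq2
        have m1 := modsmall' hk (pOdd k y.val + 1) (by omega)
        have mA := modsmall' hk (pOdd k ((y.val + 1) % (2*k))) (by omega)
        omega
      · have heq2 : ((pOdd k ((y.val + 1) % (2*k)) + 1 : ℕ) : ZMod (2*k))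
            = ((pOdd k y.val : ℕ) : ZMod (2*k)) := by
          push_cast
          rw [← hw, ← sigO_eq, ← sigO_eq]
          linear_combination heq
        rw [castz hk] at heq2
        have m1 := modsmall' hk (pOdd k ((y.val + 1) % (2*k)) + 1) (by omega)
        have mB := modsmall' hk (pOdd k y.val) (by omega)
        omega
    rcases ha with rfl | rfl
    · exact key x b hb h
    · rw [show x + -1 = x - 1 by ring] at h
      apply key (x - 1) (-b) (pmneg hb)
      rw [show x - 1 + 1 = x by ring]
      linear_combination -h
  · -- h7 : vacuous
    intro x a b ha hb h
    exfalso
    have key : ∀ y : ZMod (2*k), ∀ t : ZMod (2*k), (t = 1 ∨ t = -1) →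
        sigO k (y + 2) ≠ sigO k y + t + t := by
      intro y t ht heq
      have hy := hv y
      have hw : (y + 2).val = (y.val + 2) % (2*k) := val_add_two hk y
      have c1 := pchar hk hodd y.val (hv y)
      have mw := modsmall' hk (y.val + 2) (by omega)
      have c2 := pchar hk hodd ((y.val + 2) % (2*k)) (by omega)
      rcases ht with rfl | rfl
      · have heq2 : ((pOdd k ((y.val + 2) % (2*k)) : ℕ) : ZMod (2*k))
            = ((pOdd k y.val + 2 : ℕ) : ZMod (2*k)) := by
          push_cast
          rw [← hw, ← sigO_eq, ← sigO_eq]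
          linear_combination heq
        rw [castz hk] at heq2
        have m1 := modsmall' hk (pOdd k y.val + 2) (by omega)
        have mA := modsmall' hk (pOdd k ((y.val + 2) % (2*k))) (by omega)
        omega
      · have heq2 : ((pOdd k ((y.val + 2) % (2*k)) + 2 : ℕ) : ZMod (2*k))
            = ((pOdd k y.val : ℕ) : ZMod (2*k)) := by
          push_cast
          rw [← hw, ← sigO_eq, ← sigO_eq]
          linear_combination heq
        rw [castz hk] at heq2
        have m1 := modsmall' hk (pOdd k ((y.val + 2) % (2*k)) + 2) (by omega)
        have mB := modsmall' hk (pOdd k y.val) (by omega)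
        omega
    rcases ha with rfl | rfl
    · apply key x (-b) (pmneg hb)
      rw [show x + 2 = x + 1 + 1 by ring]
      linear_combination h
    · rw [show x + -1 + -1 = x - 2 by ring] at h
      apply key (x - 2) b hb
      rw [show x - 2 + 2 = x by ring]
      linear_combination -h


/-! ### transfer to `Fin (2*k)` -/

theorem main (hk : 6 ≤ k) (σ : ZMod (2*k) → ZMod (2*k)) (H : Hyp k σ) :
    ∃ (G : SimpleGraph (Fin (2 * k))) (c : Sym2 (Fin (2 * k)) → Fin 3),
      CubicGraph G ∧ ProperEdgeColoring G c ∧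
      ¬ HasRainbowC4 G c ∧ ¬ HasBadC6 G c ∧ ¬ HasRainbowC3 G c := by
  haveI : NeZero (2*k) := ⟨by omega⟩
  let e : ZMod (2*k) ≃ Fin (2*k) := Fintype.equivFinOfCardEq (ZMod.card _)
  let f : Fin (2*k) → ZMod (2*k) := ⇑e.symm
  have hfinj : Function.Injective f := e.symm.injective
  refine ⟨(graph k hk σ H).comap f, fun q => col k σ (q.map f), ?_, ?_, ?_, ?_, ?_⟩
  · -- cubic
    intro v
    have hset : ((graph k hk σ H).comap f).neighborSet v
        = ⇑e '' ((graph k hk σ H).neighborSet (f v)) := by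
      rw [Equiv.image_eq_preimage_symm]
      rfl
    rw [hset, Set.ncard_image_of_injective _ e.injective]
    exact cubicZ hk H (f v)
  · -- proper
    intro e₁ he₁ e₂ he₂ hne hshare
    revert he₁ he₂ hne hshare
    refine Sym2.inductionOn₂ e₁ e₂ ?_
    intro a b c d he₁ he₂ hne hshare
    rw [SimpleGraph.mem_edgeSet] at he₁ he₂
    have goal := properZ hk H s(f a, f b) (by exact he₁) s(f c, f d) (by exact he₂) ?_ ?_
    · simpa [Sym2.map_pair_eq] using goal
    · intro h
      apply hne
      have h2 := congrArg (Sym2.map ⇑e) h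
      simpa [Sym2.map_pair_eq, f] using h2
    · obtain ⟨v, hv1, hv2⟩ := hshare
      rw [Sym2.mem_iff] at hv1 hv2
      refine ⟨f v, ?_, ?_⟩ <;> rw [Sym2.mem_iff]
      · rcases hv1 with rfl | rfl
        · left; rfl
        · right; rfl
      · rcases hv2 with rfl | rfl
        · left; rfl
        · right; rfl
  · -- no rainbow C4
    rintro ⟨v1, v2, v3, v4, hd, a12, a23, a34, a41, hall⟩
    refine no_c4 hk H ⟨f v1, f v2, f v3, f v4, ?_, a12, a23, a34, a41, ?_⟩
    · exact (show List.Pairwise (· ≠ ·) (List.map f [v1, v2, v3, v4]) from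
        hd.map f (fun a b hab hfe => hab (hfinj hfe)))
    · intro colr
      rcases hall colr with h | h | h | h
      · exact Or.inl h
      · exact Or.inr (Or.inl h)
      · exact Or.inr (Or.inr (Or.inl h))
      · exact Or.inr (Or.inr (Or.inr h))
  · -- no bad C6
    rintro ⟨v1, v2, v3, v4, v5, v6, hd, a12, a23, a34, a45, a56, a61,
      q14, q25, q36, n12, n23, n13⟩
    refine no_c6 hk H ⟨f v1, f v2, f v3, f v4, f v5, f v6, ?_, a12, a23, a34, a45, a56, a61,
      q14, q25, q36, n12, n23, n13⟩
    exact (show List.Pairwise (· ≠ ·) (List.map f [v1, v2, v3, v4, v5, v6]) from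
      hd.map f (fun a b hab hfe => hab (hfinj hfe)))
  · -- no rainbow C3
    rintro ⟨v1, v2, v3, hd, a12, a23, a31, n1, n2, n3⟩
    refine no_c3 hk H ⟨f v1, f v2, f v3, ?_, a12, a23, a31, n1, n2, n3⟩
    exact (show List.Pairwise (· ≠ ·) (List.map f [v1, v2, v3]) from
      hd.map f (fun a b hab hfe => hab (hfinj hfe)))

end S10

theorem stmt10 (k : ℕ) (hk : 6 ≤ k) :
    ∃ (G : SimpleGraph (Fin (2 * k))) (c : Sym2 (Fin (2 * k)) → Fin 3),
      CubicGraph G ∧ ProperEdgeColoring G c ∧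
      ¬ HasRainbowC4 G c ∧ ¬ HasBadC6 G c ∧ ¬ HasRainbowC3 G c := by
  rcases Nat.even_or_odd k with he | ho
  · exact S10.main hk (S10.sigE k) (S10.hypE hk (Nat.even_iff.mp he))
  · exact S10.main hk (S10.sigO k) (S10.hypO hk (Nat.odd_iff.mp ho))
end

section
/- The set of twenty-one vertices W = {(1,1,1), (1,2,2), (1,3,3), (1,4,10), (2,1,4), (2,2,5), (2,3,6), (2,4,1), (2,5,2), (2,6,3), (3,1,7), (3,2,8), (3,3,9), (3,4,4), (3,5,5), (3,6,6), (4,1,10), (4,4,7), (4,5,8), (4,6,9), (5,7,11)} is a resolving set for the Hamming graph HG(5,7,11;3), and it has minimum possible size: the metric dimension of HG(5,7,11;3) equals 21. -/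
/-! ### Auxiliary material -/

abbrev V5 := Fin 5 × Fin 7 × Fin 11

def W0 : Set V5 := {(0, 0, 0), (0, 1, 1), (0, 2, 2), (0, 3, 9),
  (1, 0, 3), (1, 1, 4), (1, 2, 5), (1, 3, 0), (1, 4, 1), (1, 5, 2),
  (2, 0, 6), (2, 1, 7), (2, 2, 8), (2, 3, 3), (2, 4, 4), (2, 5, 5),
  (3, 0, 9), (3, 3, 6), (3, 4, 7), (3, 5, 8), (4, 6, 10)}

def L : List V5 := [(0, 0, 0), (0, 1, 1), (0, 2, 2), (0, 3, 9),
  (1, 0, 3), (1, 1, 4), (1, 2, 5), (1, 3, 0), (1, 4, 1), (1, 5, 2),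
  (2, 0, 6), (2, 1, 7), (2, 2, 8), (2, 3, 3), (2, 4, 4), (2, 5, 5),
  (3, 0, 9), (3, 3, 6), (3, 4, 7), (3, 5, 8), (4, 6, 10)]

def F21 : Finset V5 := {(0, 0, 0), (0, 1, 1), (0, 2, 2), (0, 3, 9),
  (1, 0, 3), (1, 1, 4), (1, 2, 5), (1, 3, 0), (1, 4, 1), (1, 5, 2),
  (2, 0, 6), (2, 1, 7), (2, 2, 8), (2, 3, 3), (2, 4, 4), (2, 5, 5),
  (3, 0, 9), (3, 3, 6), (3, 4, 7), (3, 5, 8), (4, 6, 10)}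

lemma third5 : ∀ a b : Fin 5, ∃ x : Fin 5, x ≠ a ∧ x ≠ b := by decide
lemma third7 : ∀ a b : Fin 7, ∃ x : Fin 7, x ≠ a ∧ x ≠ b := by decide
lemma third11 : ∀ a b : Fin 11, ∃ x : Fin 11, x ≠ a ∧ x ≠ b := by decide

def share (x y : V5) : Prop := x.1 = y.1 ∨ x.2.1 = y.2.1 ∨ x.2.2 = y.2.2

lemma hg_adj_iff {x y : V5} :
    (HG 5 7 11).Adj x y ↔ x.1 ≠ y.1 ∧ x.2.1 ≠ y.2.1 ∧ x.2.2 ≠ y.2.2 := Iff.rfl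

lemma dist_of_not_share {x y : V5} (h : ¬ share x y) : (HG 5 7 11).dist x y = 1 := by
  refine SimpleGraph.dist_eq_one_iff_adj.2 ?_
  exact hg_adj_iff.2 ⟨fun h1 => h (Or.inl h1), fun h2 => h (Or.inr (Or.inl h2)),
    fun h3 => h (Or.inr (Or.inr h3))⟩

lemma dist_of_share {x y : V5} (hne : x ≠ y) (hsh : share x y) :
    (HG 5 7 11).dist x y = 2 := by
  have hadj : ¬ (HG 5 7 11).Adj x y := by
    intro h
    rcases hsh with h1 | h1 | h1
    · exact (hg_adj_iff.1 h).1 h1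
    · exact (hg_adj_iff.1 h).2.1 h1
    · exact (hg_adj_iff.1 h).2.2 h1
  obtain ⟨z1, hz1a, hz1b⟩ := third5 x.1 y.1
  obtain ⟨z2, hz2a, hz2b⟩ := third7 x.2.1 y.2.1
  obtain ⟨z3, hz3a, hz3b⟩ := third11 x.2.2 y.2.2
  set z : V5 := (z1, z2, z3) with hz
  have adj1 : (HG 5 7 11).Adj x z := hg_adj_iff.2 ⟨Ne.symm hz1a, Ne.symm hz2a, Ne.symm hz3a⟩
  have adj2 : (HG 5 7 11).Adj z y := hg_adj_iff.2 ⟨hz1b, hz2b, hz3b⟩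
  let p : (HG 5 7 11).Walk x y :=
    SimpleGraph.Walk.cons adj1 (SimpleGraph.Walk.cons adj2 SimpleGraph.Walk.nil)
  have hlen : p.length = 2 := rfl
  have hle : (HG 5 7 11).dist x y ≤ 2 := hlen ▸ SimpleGraph.dist_le p
  have hne0 : (HG 5 7 11).dist x y ≠ 0 := by
    intro h0
    rcases SimpleGraph.dist_eq_zero_iff_eq_or_not_reachable.1 h0 with h | h
    · exact hne h
    · exact h ⟨p⟩
  have hne1 : (HG 5 7 11).dist x y ≠ 1 := fun h1 =>
    hadj (SimpleGraph.dist_eq_one_iff_adj.1 h1)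
  omega

/-- Key consequence of resolving for pairs differing only in the third coordinate. -/
lemma resolve3 {W : Set V5} (hW : IsResolving W) {a : Fin 5} {b : Fin 7} {c c' : Fin 11}
    (hcc : c ≠ c') (hx : ((a, b, c) : V5) ∉ W) (hy : ((a, b, c') : V5) ∉ W) :
    ∃ w ∈ W, w.1 ≠ a ∧ w.2.1 ≠ b ∧ (w.2.2 = c ∨ w.2.2 = c') := by
  obtain ⟨w, hwW, hd⟩ := hW (a, b, c) (a, b, c') hx hy
    (fun h => hcc (congrArg (fun p => p.2.2) h))
  have hxw : ((a, b, c) : V5) ≠ w := fun h => hx (h ▸ hwW)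
  have hyw : ((a, b, c') : V5) ≠ w := fun h => hy (h ▸ hwW)
  by_cases s1 : share (a, b, c) w <;> by_cases s2 : share (a, b, c') w
  · rw [dist_of_share hxw s1, dist_of_share hyw s2] at hd; exact absurd rfl hd
  · have na : ¬ (a = w.1) := fun h => s2 (Or.inl h)
    have nb : ¬ (b = w.2.1) := fun h => s2 (Or.inr (Or.inl h))
    have hc : c = w.2.2 := by
      rcases s1 with h | h | h
      · exact absurd h na
      · exact absurd h nb
      · exact h
    exact ⟨w, hwW, fun h => na h.symm, fun h => nb h.symm, Or.inl hc.symm⟩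
  · have na : ¬ (a = w.1) := fun h => s1 (Or.inl h)
    have nb : ¬ (b = w.2.1) := fun h => s1 (Or.inr (Or.inl h))
    have hc : c' = w.2.2 := by
      rcases s2 with h | h | h
      · exact absurd h na
      · exact absurd h nb
      · exact h
    exact ⟨w, hwW, fun h => na h.symm, fun h => nb h.symm, Or.inr hc.symm⟩
  · rw [dist_of_not_share s1, dist_of_not_share s2] at hd; exact absurd rfl hd

/-- If all landmarks with third coordinate `c` or `c'` lie in `{u, v}`, contradiction. -/
lemma keyD {W : Set V5} (hW : IsResolving W) {c c' : Fin 11} (hcc : c ≠ c') (u v : V5)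
    (hsub : ∀ w ∈ W, (w.2.2 = c ∨ w.2.2 = c') → w = u ∨ w = v) : False := by
  obtain ⟨a, b, h1, h2, h3, h4⟩ : ∃ (a : Fin 5) (b : Fin 7),
      (u.1 = a ∨ u.2.1 = b) ∧ (v.1 = a ∨ v.2.1 = b) ∧
      ¬(u.1 = a ∧ u.2.1 = b) ∧ ¬(v.1 = a ∧ v.2.1 = b) := by
    by_cases h12 : u.1 = v.1
    · obtain ⟨b, hb1, hb2⟩ := third7 u.2.1 v.2.1
      exact ⟨u.1, b, Or.inl rfl, Or.inl h12.symm,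
        fun h => hb1 h.2.symm, fun h => hb2 h.2.symm⟩
    · by_cases h22 : u.2.1 = v.2.1
      · obtain ⟨a, ha1, ha2⟩ := third5 u.1 v.1
        exact ⟨a, u.2.1, Or.inr rfl, Or.inr h22.symm,
          fun h => ha1 h.1.symm, fun h => ha2 h.1.symm⟩
      · exact ⟨u.1, v.2.1, Or.inl rfl, Or.inr rfl,
          fun h => h22 h.2, fun h => h12 h.1.symm⟩
  have hxW : ((a, b, c) : V5) ∉ W := by
    intro hmem
    rcases hsub _ hmem (Or.inl rfl) with h | h
    · apply h3; rw [← h]; exact ⟨rfl, rfl⟩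
    · apply h4; rw [← h]; exact ⟨rfl, rfl⟩
  have hyW : ((a, b, c') : V5) ∉ W := by
    intro hmem
    rcases hsub _ hmem (Or.inr rfl) with h | h
    · apply h3; rw [← h]; exact ⟨rfl, rfl⟩
    · apply h4; rw [← h]; exact ⟨rfl, rfl⟩
  obtain ⟨w, hwW, hw1, hw2, hw3⟩ := resolve3 hW hcc hxW hyW
  rcases hsub w hwW hw3 with h | h
  · rw [← h] at h1
    rcases h1 with h' | h'
    · exact hw1 h'
    · exact hw2 h'
  · rw [← h] at h2
    rcases h2 with h' | h'
    · exact hw1 h'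
    · exact hw2 h'

/-- Lower bound: any resolving set of `HG(5,7,11;3)` has at least 21 elements. -/
lemma lower_bound {W : Set V5} (hW : IsResolving W) : 21 ≤ W.ncard := by
  classical
  have hfin : W.Finite := Set.toFinite W
  set F := hfin.toFinset with hFdef
  have hF : ∀ w : V5, w ∈ F ↔ w ∈ W := fun w => hfin.mem_toFinset
  have hcard : W.ncard = F.card := Set.ncard_eq_toFinset_card W hfin
  set fib : Fin 11 → Finset V5 := fun c => F.filter (fun w => w.2.2 = c) with hfib
  have hsum : F.card = ∑ c : Fin 11, (fib c).card :=
    Finset.card_eq_sum_card_fiberwise (fun x _ => Finset.mem_univ _)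
  have claim1 : ∀ c c' : Fin 11, c ≠ c' → (fib c).card ≤ 1 → (fib c').card ≤ 1 → False := by
    intro c c' hcc h1 h2
    obtain ⟨u, hu⟩ := Finset.card_le_one_iff_subset_singleton.1 h1
    obtain ⟨v, hv⟩ := Finset.card_le_one_iff_subset_singleton.1 h2
    refine keyD hW hcc u v ?_
    intro w hwW hor
    rcases hor with h | h
    · exact Or.inl (Finset.mem_singleton.1 (hu (Finset.mem_filter.2 ⟨(hF w).2 hwW, h⟩)))
    · exact Or.inr (Finset.mem_singleton.1 (hv (Finset.mem_filter.2 ⟨(hF w).2 hwW, h⟩)))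
  have claim2 : ∀ c c' : Fin 11, c ≠ c' → (fib c).card = 0 → (fib c').card ≤ 2 → False := by
    intro c c' hcc h0 h2
    have hcempty : fib c = ∅ := Finset.card_eq_zero.1 h0
    rcases (fib c').eq_empty_or_nonempty with he | ⟨u, hu⟩
    · exact claim1 c c' hcc (by simp [h0]) (by simp [he])
    · have herase : ((fib c').erase u).card ≤ 1 := by
        rw [Finset.card_erase_of_mem hu]; omega
      obtain ⟨v, hv⟩ := Finset.card_le_one_iff_subset_singleton.1 herase
      refine keyD hW hcc u v ?_
      intro w hwW hor
      rcases hor with h | h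
      · have : w ∈ fib c := Finset.mem_filter.2 ⟨(hF w).2 hwW, h⟩
        rw [hcempty] at this
        exact absurd this (Finset.notMem_empty w)
      · have hwf : w ∈ fib c' := Finset.mem_filter.2 ⟨(hF w).2 hwW, h⟩
        by_cases hwu : w = u
        · exact Or.inl hwu
        · exact Or.inr (Finset.mem_singleton.1 (hv (Finset.mem_erase.2 ⟨hwu, hwf⟩)))
  rw [hcard, hsum]
  by_cases hzero : ∃ c, (fib c).card = 0
  · obtain ⟨c₀, hc₀⟩ := hzero
    have h3 : ∀ c ∈ Finset.univ.erase c₀, 3 ≤ (fib c).card := by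
      intro c hc
      by_contra hlt
      push_neg at hlt
      exact claim2 c₀ c (Ne.symm (Finset.mem_erase.1 hc).1) hc₀ (by omega)
    have hsmul := Finset.card_nsmul_le_sum (Finset.univ.erase c₀)
      (fun c => (fib c).card) 3 h3
    have h10 : (Finset.univ.erase c₀).card = 10 := by
      rw [Finset.card_erase_of_mem (Finset.mem_univ c₀)]
      simp
    rw [h10, smul_eq_mul] at hsmul
    have hle : ∑ c ∈ Finset.univ.erase c₀, (fib c).card ≤ ∑ c : Fin 11, (fib c).card :=
      Finset.sum_le_sum_of_subset (Finset.erase_subset _ _)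
    omega
  · push_neg at hzero
    by_cases hone : ∃ c, (fib c).card ≤ 1
    · obtain ⟨c₁, hc₁⟩ := hone
      have h2 : ∀ c ∈ Finset.univ.erase c₁, 2 ≤ (fib c).card := by
        intro c hc
        by_contra hlt
        push_neg at hlt
        exact claim1 c₁ c (Ne.symm (Finset.mem_erase.1 hc).1) hc₁ (by omega)
      have hsmul := Finset.card_nsmul_le_sum (Finset.univ.erase c₁)
        (fun c => (fib c).card) 2 h2
      have h10 : (Finset.univ.erase c₁).card = 10 := by
        rw [Finset.card_erase_of_mem (Finset.mem_univ c₁)]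
        simp
      rw [h10, smul_eq_mul] at hsmul
      have heq := Finset.sum_erase_add Finset.univ (fun c => (fib c).card)
        (Finset.mem_univ c₁)
      have h1 : 1 ≤ (fib c₁).card := Nat.one_le_iff_ne_zero.2 (hzero c₁)
      have heq' : ∑ c ∈ Finset.univ.erase c₁, (fib c).card + (fib c₁).card
          = ∑ c : Fin 11, (fib c).card := heq
      omega
    · push_neg at hone
      have h2 : ∀ c ∈ (Finset.univ : Finset (Fin 11)), 2 ≤ (fib c).card := by
        intro c _
        have := hone c
        omega
      have hsmul := Finset.card_nsmul_le_sum (Finset.univ : Finset (Fin 11))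
        (fun c => (fib c).card) 2 h2
      rw [Finset.card_univ, Fintype.card_fin, smul_eq_mul] at hsmul
      omega

/-! ### Upper bound machinery -/

def bshare (x w : V5) : Bool :=
  decide (x.1 = w.1) || decide (x.2.1 = w.2.1) || decide (x.2.2 = w.2.2)

def nstep (x : V5) (n : ℕ) (w : V5) : ℕ := 2 * n + (bshare x w).toNat

def ncode (x : V5) : ℕ := L.foldl (nstep x) 0

def allV : List V5 :=
  (List.finRange 5).flatMap fun a =>
    (List.finRange 7).flatMap fun b =>
      (List.finRange 11).map fun c => (a, b, c)

def codes : List ℕ := (allV.filter (fun x => x ∉ L)).map ncode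

set_option maxRecDepth 100000 in
set_option maxHeartbeats 8000000 in
lemma codes_nodup : codes.Nodup := by decide

lemma mem_allV : ∀ x : V5, x ∈ allV := by
  rintro ⟨a, b, c⟩
  simp only [allV, List.mem_flatMap, List.mem_map, List.mem_finRange]
  exact ⟨a, trivial, b, trivial, c, trivial, rfl⟩

lemma bshare_iff {x w : V5} : bshare x w = true ↔ share x w := by
  simp [bshare, share, or_assoc]

lemma ncode_congr {x y : V5} (h : ∀ w ∈ L, bshare x w = bshare y w) :
    ncode x = ncode y := by
  unfold ncode
  suffices H : ∀ (l : List V5), (∀ w ∈ l, bshare x w = bshare y w) →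
      ∀ n : ℕ, l.foldl (nstep x) n = l.foldl (nstep y) n from H L h 0
  intro l hl
  induction l with
  | nil => intro n; rfl
  | cons a t ih =>
    intro n
    simp only [List.foldl_cons]
    rw [show nstep x n a = nstep y n a by unfold nstep; rw [hl a (List.mem_cons_self)]]
    exact ih (fun w hw => hl w (List.mem_cons_of_mem a hw)) _

lemma memW0_iff : ∀ x : V5, x ∈ W0 ↔ x ∈ L := by
  intro x
  simp [W0, L]

lemma ncode_inj : ∀ x ∈ allV.filter (fun x => x ∉ L), ∀ y ∈ allV.filter (fun x => x ∉ L),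
    ncode x = ncode y → x = y :=
  List.inj_on_of_nodup_map codes_nodup

lemma resolving_W0 : IsResolving W0 := by
  intro x y hx hy hxy
  have hx' : x ∉ L := fun h => hx ((memW0_iff x).2 h)
  have hy' : y ∉ L := fun h => hy ((memW0_iff y).2 h)
  have hxm : x ∈ allV.filter (fun x => x ∉ L) :=
    List.mem_filter.2 ⟨mem_allV x, by simpa using hx'⟩
  have hym : y ∈ allV.filter (fun x => x ∉ L) :=
    List.mem_filter.2 ⟨mem_allV y, by simpa using hy'⟩
  have hcode : ncode x ≠ ncode y := fun h => hxy (ncode_inj x hxm y hym h)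
  have hex : ∃ w ∈ L, bshare x w ≠ bshare y w := by
    by_contra hcon
    push_neg at hcon
    exact hcode (ncode_congr hcon)
  obtain ⟨w, hwL, hbw⟩ := hex
  refine ⟨w, (memW0_iff w).2 hwL, ?_⟩
  have hxw : x ≠ w := fun h => hx' (h ▸ hwL)
  have hyw : y ≠ w := fun h => hy' (h ▸ hwL)
  cases hb1 : bshare x w <;> cases hb2 : bshare y w
  · exact absurd (hb1.trans hb2.symm) hbw
  · have h1 : ¬ share x w := fun hs => by rw [← bshare_iff, hb1] at hs; exact Bool.false_ne_true hs
    have h2 : share y w := bshare_iff.1 hb2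
    rw [dist_of_not_share h1, dist_of_share hyw h2]
    omega
  · have h1 : share x w := bshare_iff.1 hb1
    have h2 : ¬ share y w := fun hs => by rw [← bshare_iff, hb2] at hs; exact Bool.false_ne_true hs
    rw [dist_of_share hxw h1, dist_of_not_share h2]
    omega
  · exact absurd (hb1.trans hb2.symm) hbw

lemma W0_eq_coe : W0 = (F21 : Set V5) := by
  simp only [W0, F21, Finset.coe_insert, Finset.coe_singleton]

lemma ncard_W0 : W0.ncard = 21 := by
  rw [W0_eq_coe, Set.ncard_coe_finset]
  decide

lemma metricDim_eq : metricDim 5 7 11 = 21 := by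
  have hmem : 21 ∈ {k | ∃ W : Set V5, IsResolving W ∧ W.ncard = k} :=
    ⟨W0, resolving_W0, ncard_W0⟩
  refine le_antisymm (Nat.sInf_le hmem) (le_csInf ⟨21, hmem⟩ ?_)
  rintro k ⟨W, hW, rfl⟩
  exact lower_bound hW

theorem stmt19 :
    IsResolving ({(0, 0, 0), (0, 1, 1), (0, 2, 2), (0, 3, 9),
        (1, 0, 3), (1, 1, 4), (1, 2, 5), (1, 3, 0), (1, 4, 1), (1, 5, 2),
        (2, 0, 6), (2, 1, 7), (2, 2, 8), (2, 3, 3), (2, 4, 4), (2, 5, 5),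
        (3, 0, 9), (3, 3, 6), (3, 4, 7), (3, 5, 8), (4, 6, 10)} :
      Set (Fin 5 × Fin 7 × Fin 11)) ∧
    ({(0, 0, 0), (0, 1, 1), (0, 2, 2), (0, 3, 9),
        (1, 0, 3), (1, 1, 4), (1, 2, 5), (1, 3, 0), (1, 4, 1), (1, 5, 2),
        (2, 0, 6), (2, 1, 7), (2, 2, 8), (2, 3, 3), (2, 4, 4), (2, 5, 5),
        (3, 0, 9), (3, 3, 6), (3, 4, 7), (3, 5, 8), (4, 6, 10)} :
      Set (Fin 5 × Fin 7 × Fin 11)).ncard = 21 ∧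
    metricDim 5 7 11 = 21 :=
  ⟨resolving_W0, ncard_W0, metricDim_eq⟩
end
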